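/- arXiv:2603.29330 — 12 statements merged into one kernel-verified Lean document; each statement's English description precedes it below -/
import Mathlib

section
/- For all t ≥ T := √(2r²/(9μ)), the derivative of E satisfies E'(t) = − t^{2r/3} ( (2r/(3t))·( f_* − f(x(t)) − ⟨∇f(x(t)), x_* − x(t)⟩ ) − ((2r³ − 18r)/(27t³))·‖x(t) − x_*‖² ). -/
open scoped RealInnerProductSpace

set_option maxHeartbeats 2000000 in
/-- Lemma 3 (computation of `E'` for the NAG system `ẍ + (r/t)ẋ + ∇f(x) = 0`):
for `t ≥ T := √(2r²/(9μ))`, the Lyapunov function `E` has derivative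
`E'(t) = -t^(2r/3) * ((2r/(3t)) * (f_* - f(x t) - ⟪∇f(x t), x_* - x t⟫)
          - ((2r³ - 18r)/(27t³)) * ‖x t - x_*‖²)`. -/

theorem stmt_1 {n : ℕ} (μ r : ℝ) (hμ : 0 < μ) (hr : 0 < r)
    (f : EuclideanSpace ℝ (Fin n) → ℝ)
    (f' : EuclideanSpace ℝ (Fin n) → EuclideanSpace ℝ (Fin n))
    (hf' : ∀ p, HasGradientAt f (f' p) p)
    (hsc : ∀ p q, f q ≥ f p + ⟪f' p, q - p⟫ + μ / 2 * ‖q - p‖ ^ 2)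
    (xstar : EuclideanSpace ℝ (Fin n)) (hmin : ∀ p, f xstar ≤ f p)
    (x x' x'' : ℝ → EuclideanSpace ℝ (Fin n))
    (hx : ∀ t > (0:ℝ), HasDerivAt x (x' t) t)
    (hx' : ∀ t > (0:ℝ), HasDerivAt x' (x'' t) t)
    (hode : ∀ t > (0:ℝ), x'' t + (r / t) • x' t + f' (x t) = 0)
    (E : ℝ → ℝ)
    (hE : ∀ t, E t
        = t ^ (2 * r / 3) * (f (x t) - f xstar - (r ^ 2 - 3 * r) / (9 * t ^ 2) * ‖x t - xstar‖ ^ 2)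
          + 1 / 2 * t ^ (2 * r / 3) * ‖x' t + (2 * r / (3 * t)) • (x t - xstar)‖ ^ 2) :
    ∀ t, Real.sqrt (2 * r ^ 2 / (9 * μ)) ≤ t →
      HasDerivAt E
        (-(t ^ (2 * r / 3)) * (2 * r / (3 * t) * (f xstar - f (x t) - ⟪f' (x t), xstar - x t⟫)
          - (2 * r ^ 3 - 18 * r) / (27 * t ^ 3) * ‖x t - xstar‖ ^ 2)) t := by
  intro t ht
  have ht0 : (0:ℝ) < t :=
    lt_of_lt_of_le (Real.sqrt_pos.2 (by positivity)) ht
  have hEG : E = fun s =>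
      s ^ (2 * r / 3) * (f (x s) - f xstar
        - (r ^ 2 - 3 * r) / (9 * s ^ 2) * ⟪x s - xstar, x s - xstar⟫)
      + 1 / 2 * s ^ (2 * r / 3) *
        ⟪x' s + (2 * r / (3 * s)) • (x s - xstar),
          x' s + (2 * r / (3 * s)) • (x s - xstar)⟫ := by
    funext s
    rw [hE s, real_inner_self_eq_norm_sq, real_inner_self_eq_norm_sq]
  rw [hEG]
  -- basic derivatives
  have hA : HasDerivAt (fun s : ℝ => s ^ (2 * r / 3))
      ((2 * r / 3) * t ^ (2 * r / 3 - 1)) t := by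
    simpa using Real.hasDerivAt_rpow_const (x := t) (p := 2 * r / 3) (Or.inl ht0.ne')
  have hfx : HasDerivAt (fun s => f (x s)) ⟪f' (x t), x' t⟫ t := by
    have := ((hf' (x t)).hasFDerivAt.comp_hasDerivAt t (hx t ht0))
    exact this
  have hu : HasDerivAt (fun s => x s - xstar) (x' t) t := (hx t ht0).sub_const xstar
  have hq : HasDerivAt (fun s => ⟪x s - xstar, x s - xstar⟫ : ℝ → ℝ)
      (⟪x t - xstar, x' t⟫ + ⟪x' t, x t - xstar⟫) t := hu.inner ℝ hu
  have hden : HasDerivAt (fun s : ℝ => 9 * s ^ 2) (9 * (2 * t ^ 1)) t :=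
    (hasDerivAt_pow 2 t).const_mul 9
  have hc : HasDerivAt (fun s : ℝ => (r ^ 2 - 3 * r) / (9 * s ^ 2))
      ((0 * (9 * t ^ 2) - (r ^ 2 - 3 * r) * (9 * (2 * t ^ 1))) / (9 * t ^ 2) ^ 2) t :=
    (hasDerivAt_const t (r ^ 2 - 3 * r)).div hden (by positivity)
  have hs : HasDerivAt (fun s : ℝ => 2 * r / (3 * s))
      ((0 * (3 * t) - 2 * r * 3) / (3 * t) ^ 2) t :=
    (hasDerivAt_const t (2 * r)).div (by simpa using (hasDerivAt_id t).const_mul 3 : HasDerivAt (fun s : ℝ => 3 * s) 3 t) (by positivity)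
  have hsm : HasDerivAt (fun s : ℝ => (2 * r / (3 * s)) • (x s - xstar))
      ((2 * r / (3 * t)) • x' t
        + ((0 * (3 * t) - 2 * r * 3) / (3 * t) ^ 2) • (x t - xstar)) t := hs.smul hu
  have hwv : HasDerivAt (fun s : ℝ => x' s + (2 * r / (3 * s)) • (x s - xstar))
      (x'' t + ((2 * r / (3 * t)) • x' t
        + ((0 * (3 * t) - 2 * r * 3) / (3 * t) ^ 2) • (x t - xstar))) t :=
    (hx' t ht0).add hsm
  set w : EuclideanSpace ℝ (Fin n) := x' t + (2 * r / (3 * t)) • (x t - xstar) with hw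
  set w' : EuclideanSpace ℝ (Fin n) := x'' t + ((2 * r / (3 * t)) • x' t
        + ((0 * (3 * t) - 2 * r * 3) / (3 * t) ^ 2) • (x t - xstar)) with hw'
  have hW : HasDerivAt (fun s : ℝ =>
      ⟪x' s + (2 * r / (3 * s)) • (x s - xstar),
        x' s + (2 * r / (3 * s)) • (x s - xstar)⟫ : ℝ → ℝ)
      (⟪w, w'⟫ + ⟪w', w⟫) t := hwv.inner ℝ hwv
  have h1 := hfx.sub_const (f xstar)
  have h2 := h1.sub (hc.mul hq)
  have h3 := hA.mul h2
  have h4 := (hA.const_mul (1/2 : ℝ)).mul hW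
  have hTot := h3.add h4
  convert hTot using 1
  case e'_4 => rfl
  case e'_5 => rfl
  case e'_8 => rfl
  -- now prove the scalar identity
  have hode' : x'' t = -((r / t) • x' t + f' (x t)) := by
    have h := hode t ht0
    rw [add_assoc] at h
    exact eq_neg_of_add_eq_zero_left h
  have hrpow : t ^ (2 * r / 3 - 1) = t ^ (2 * r / 3) / t := by
    rw [Real.rpow_sub ht0, Real.rpow_one]
  rw [hw, hw', hode', hrpow]
  rw [show ‖x t - xstar‖ ^ 2 = ⟪x t - xstar, x t - xstar⟫ from (real_inner_self_eq_norm_sq _).symm]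
  simp only [inner_add_left, inner_add_right, inner_smul_left, inner_smul_right,
    inner_neg_left, inner_neg_right, inner_sub_left, inner_sub_right,
    RCLike.inner_apply, conj_trivial, Pi.sub_apply, Pi.mul_apply,
    real_inner_comm (x t) (x' t), real_inner_comm (x t) (f' (x t)),
    real_inner_comm xstar (x' t), real_inner_comm xstar (f' (x t)),
    real_inner_comm xstar (x t), real_inner_comm (x' t) (f' (x t))]
  field_simp
  ring
end

section
/- For all t ≥ T := √(2r²/(9μ)), the derivative of E satisfies E'(t) ≤ − t^{2r/3} · (2r/(3t³)) · ‖x(t) − x_*‖² ≤ 0; in particular E is non-increasing on [T, ∞). -/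
open scoped RealInnerProductSpace

set_option maxHeartbeats 1600000 in
/-- Lemma 3 (descent of the Lyapunov function for `ẍ + (r/t)ẋ + ∇f(x) = 0`):
for `t ≥ T := √(2r²/(9μ))`, `E'(t) ≤ -t^(2r/3) * (2r/(3t³)) * ‖x t - x_*‖² ≤ 0`;
in particular `E` is non-increasing on `[T, ∞)`. -/
theorem stmt_2
{n : ℕ} (μ r : ℝ) (hμ : 0 < μ) (hr : 0 < r)
    (f : EuclideanSpace ℝ (Fin n) → ℝ)
    (f' : EuclideanSpace ℝ (Fin n) → EuclideanSpace ℝ (Fin n))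
    (hf' : ∀ p, HasGradientAt f (f' p) p)
    (hsc : ∀ p q, f q ≥ f p + ⟪f' p, q - p⟫ + μ / 2 * ‖q - p‖ ^ 2)
    (xstar : EuclideanSpace ℝ (Fin n)) (hmin : ∀ p, f xstar ≤ f p)
    (x x' x'' : ℝ → EuclideanSpace ℝ (Fin n))
    (hx : ∀ t > (0:ℝ), HasDerivAt x (x' t) t)
    (hx' : ∀ t > (0:ℝ), HasDerivAt x' (x'' t) t)
    (hode : ∀ t > (0:ℝ), x'' t + (r / t) • x' t + f' (x t) = 0)
(E : ℝ → ℝ)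
    (hE : ∀ t, E t
        = t ^ (2 * r / 3) * (f (x t) - f xstar - (r ^ 2 - 3 * r) / (9 * t ^ 2) * ‖x t - xstar‖ ^ 2)
          + 1 / 2 * t ^ (2 * r / 3) * ‖x' t + (2 * r / (3 * t)) • (x t - xstar)‖ ^ 2) :
    (∀ t, Real.sqrt (2 * r ^ 2 / (9 * μ)) ≤ t →
      deriv E t ≤ -(t ^ (2 * r / 3)) * (2 * r / (3 * t ^ 3)) * ‖x t - xstar‖ ^ 2 ∧
      -(t ^ (2 * r / 3)) * (2 * r / (3 * t ^ 3)) * ‖x t - xstar‖ ^ 2 ≤ 0) ∧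
    AntitoneOn E (Set.Ici (Real.sqrt (2 * r ^ 2 / (9 * μ)))) := by
  have hT0 : 0 < Real.sqrt (2 * r ^ 2 / (9 * μ)) := Real.sqrt_pos.mpr (by positivity)
  have hGv : ∀ t : ℝ,
      f (x t) - f xstar + μ / 2 * ‖x t - xstar‖ ^ 2 ≤ ⟪f' (x t), x t - xstar⟫ := by
    intro t
    have h := hsc (x t) xstar
    rw [show xstar - x t = -(x t - xstar) by abel] at h
    rw [inner_neg_right, norm_neg] at h
    linarith
  have hD : ∀ t : ℝ, 0 < t → HasDerivAt E
      (2 * r / (3 * t) * t ^ (2 * r / 3) * (f (x t) - f xstar)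
        - 2 * r / (3 * t) * t ^ (2 * r / 3) * ⟪f' (x t), x t - xstar⟫
        + 2 * (r ^ 3 - 9 * r) / 27 * t ^ (2 * r / 3) / t ^ 3 * ‖x t - xstar‖ ^ 2) t := by
    intro t ht
    have hxt := hx t ht
    have hxt' := hx' t ht
    have hxpp : x'' t = -((r / t) • x' t + f' (x t)) := by
      have h := hode t ht
      rw [add_assoc] at h
      exact eq_neg_of_add_eq_zero_left h
    have hEeq : E = fun τ : ℝ =>
        τ ^ (2 * r / 3) * (f (x τ) - f xstar
          - (r ^ 2 - 3 * r) / (9 * τ ^ 2) * ⟪x τ - xstar, x τ - xstar⟫)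
        + 1 / 2 * τ ^ (2 * r / 3) *
            ⟪x' τ + (2 * r / (3 * τ)) • (x τ - xstar),
              x' τ + (2 * r / (3 * τ)) • (x τ - xstar)⟫ := by
      funext τ
      rw [hE τ, real_inner_self_eq_norm_sq, real_inner_self_eq_norm_sq]
    rw [hEeq]
    have hA : HasDerivAt (fun τ : ℝ => τ ^ (2 * r / 3)) (2 * r / 3 * t ^ (2 * r / 3 - 1)) t :=
      Real.hasDerivAt_rpow_const (Or.inl ht.ne')
    have hv : HasDerivAt (fun τ => x τ - xstar) (x' t) t := hxt.sub_const xstar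
    have hfx : HasDerivAt (fun τ => f (x τ)) ⟪f' (x t), x' t⟫ t := by
      have h1 := ((hf' (x t)).hasFDerivAt).comp_hasDerivAt t hxt
      have h2 : HasDerivAt (f ∘ x) ⟪f' (x t), x' t⟫ t := by
        simpa [Function.comp, InnerProductSpace.toDual_apply_apply] using h1
      exact h2
    have hden : HasDerivAt (fun τ : ℝ => 9 * τ ^ 2) (9 * (↑2 * t ^ 1)) t :=
      (hasDerivAt_pow 2 t).const_mul 9
    have hc : HasDerivAt (fun τ : ℝ => (r ^ 2 - 3 * r) / (9 * τ ^ 2))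
        ((0 * (9 * t ^ 2) - (r ^ 2 - 3 * r) * (9 * (↑2 * t ^ 1))) / (9 * t ^ 2) ^ 2) t :=
      (hasDerivAt_const t (r ^ 2 - 3 * r)).div hden (by positivity)
    have hN : HasDerivAt (fun τ => ⟪x τ - xstar, x τ - xstar⟫)
        (⟪x t - xstar, x' t⟫ + ⟪x' t, x t - xstar⟫) t := hv.inner ℝ hv
    have hden3 : HasDerivAt (fun τ : ℝ => 3 * τ) (3 * 1) t := (hasDerivAt_id t).const_mul 3
    have hs : HasDerivAt (fun τ : ℝ => 2 * r / (3 * τ))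
        ((0 * (3 * t) - 2 * r * (3 * 1)) / (3 * t) ^ 2) t :=
      (hasDerivAt_const t (2 * r)).div hden3 (by positivity)
    have hw : HasDerivAt (fun τ => x' τ + (2 * r / (3 * τ)) • (x τ - xstar))
        (x'' t + ((2 * r / (3 * t)) • x' t
          + ((0 * (3 * t) - 2 * r * (3 * 1)) / (3 * t) ^ 2) • (x t - xstar))) t :=
      hxt'.add (hs.smul hv)
    have hW := hw.inner ℝ hw
    have hfinal := (hA.mul ((hfx.sub_const (f xstar)).sub (hc.mul hN))).add
      ((hA.const_mul (1 / 2 : ℝ)).mul hW)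
    convert hfinal using 1
    · rfl
    · rfl
    · rfl
    simp only [Pi.sub_apply, Pi.mul_apply]
    rw [hxpp]
    simp only [inner_add_left, inner_add_right, inner_neg_left, inner_neg_right,
      real_inner_smul_left, real_inner_smul_right]
    simp only [real_inner_comm (x' t) (x t - xstar), real_inner_comm (x' t) (f' (x t)),
      real_inner_comm (x t - xstar) (f' (x t))]
    simp only [real_inner_self_eq_norm_sq]
    rw [Real.rpow_sub ht, Real.rpow_one]
    field_simp
    ring
  have bound : ∀ t, Real.sqrt (2 * r ^ 2 / (9 * μ)) ≤ t →
      deriv E t ≤ -(t ^ (2 * r / 3)) * (2 * r / (3 * t ^ 3)) * ‖x t - xstar‖ ^ 2 := by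
    intro t htT
    have ht : 0 < t := lt_of_lt_of_le hT0 htT
    have hμt : 2 * r ^ 2 / (9 * μ) ≤ t ^ 2 := by
      nlinarith [Real.sq_sqrt (show (0:ℝ) ≤ 2 * r ^ 2 / (9 * μ) by positivity),
        Real.sqrt_nonneg (2 * r ^ 2 / (9 * μ))]
    have hμt2 : 2 * r ^ 2 ≤ 9 * μ * t ^ 2 := by
      rw [div_le_iff₀ (by positivity)] at hμt; nlinarith
    rw [(hD t ht).deriv]
    have hApos : 0 < t ^ (2 * r / 3) := Real.rpow_pos_of_pos ht _
    have hnv0 : (0:ℝ) ≤ ‖x t - xstar‖ ^ 2 := by positivity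
    have hg := hGv t
    have hbr : 0 ≤ 2 * r / 3 * t ^ 2 * (⟪f' (x t), x t - xstar⟫ - (f (x t) - f xstar))
        - 2 * r ^ 3 / 27 * ‖x t - xstar‖ ^ 2 := by
      nlinarith [mul_nonneg (mul_nonneg hr.le (sq_nonneg t))
          (show (0:ℝ) ≤ ⟪f' (x t), x t - xstar⟫ - (f (x t) - f xstar) - μ / 2 * ‖x t - xstar‖ ^ 2
            by linarith),
        mul_nonneg (mul_nonneg hr.le hnv0) (show (0:ℝ) ≤ 9 * μ * t ^ 2 - 2 * r ^ 2 by linarith)]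
    have hkey : -(t ^ (2 * r / 3)) * (2 * r / (3 * t ^ 3)) * ‖x t - xstar‖ ^ 2
        - (2 * r / (3 * t) * t ^ (2 * r / 3) * (f (x t) - f xstar)
          - 2 * r / (3 * t) * t ^ (2 * r / 3) * ⟪f' (x t), x t - xstar⟫
          + 2 * (r ^ 3 - 9 * r) / 27 * t ^ (2 * r / 3) / t ^ 3 * ‖x t - xstar‖ ^ 2)
        = t ^ (2 * r / 3) / t ^ 3 *
            (2 * r / 3 * t ^ 2 * (⟪f' (x t), x t - xstar⟫ - (f (x t) - f xstar))
              - 2 * r ^ 3 / 27 * ‖x t - xstar‖ ^ 2) := by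
      field_simp
      ring
    have hpos : 0 ≤ t ^ (2 * r / 3) / t ^ 3 *
        (2 * r / 3 * t ^ 2 * (⟪f' (x t), x t - xstar⟫ - (f (x t) - f xstar))
          - 2 * r ^ 3 / 27 * ‖x t - xstar‖ ^ 2) :=
      mul_nonneg (by positivity) hbr
    linarith [hkey, hpos]
  have hneg : ∀ t, Real.sqrt (2 * r ^ 2 / (9 * μ)) ≤ t →
      -(t ^ (2 * r / 3)) * (2 * r / (3 * t ^ 3)) * ‖x t - xstar‖ ^ 2 ≤ 0 := by
    intro t htT
    have ht : 0 < t := lt_of_lt_of_le hT0 htT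
    have h0 : (0:ℝ) ≤ t ^ (2 * r / 3) * (2 * r / (3 * t ^ 3)) * ‖x t - xstar‖ ^ 2 := by
      positivity
    linarith
  refine ⟨fun t htT => ⟨bound t htT, hneg t htT⟩, ?_⟩
  apply antitoneOn_of_deriv_nonpos (convex_Ici _)
  · intro t htT
    exact ((hD t (lt_of_lt_of_le hT0 htT)).differentiableAt.continuousAt).continuousWithinAt
  · intro t htT
    rw [interior_Ici] at htT
    exact (hD t (lt_trans hT0 htT)).differentiableAt.differentiableWithinAt
  · intro t htT
    rw [interior_Ici] at htT
    exact le_trans (bound t (le_of_lt htT)) (hneg t (le_of_lt htT))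
end

section
/- There exists a constant C > 0 such that for all t ≥ T := √(2r²/(9μ)), f(x(t)) − f_* − ((r² − 3r)/(9t²))·‖x(t) − x_*‖² ≤ C · t^{−2r/3}. -/
open scoped RealInnerProductSpace

private lemma rpow_split (t : ℝ) (ht : 0 < t) (q q' : ℝ) (k : ℕ) (h : q' = q - k) :
    t ^ q = t ^ q' * t ^ k := by
  rw [h, ← Real.rpow_natCast t k, ← Real.rpow_add ht]
  congr 1
  ring

set_option maxHeartbeats 1000000 in

/-- Lemma 4: for `t ≥ T := √(2r²/(9μ))`,
`f(x t) - f_* - ((r² - 3r)/(9t²)) * ‖x t - x_*‖² = O(t^(-2r/3))`. -/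
theorem stmt_3
{n : ℕ} (μ r : ℝ) (hμ : 0 < μ) (hr : 0 < r)
    (f : EuclideanSpace ℝ (Fin n) → ℝ)
    (f' : EuclideanSpace ℝ (Fin n) → EuclideanSpace ℝ (Fin n))
    (hf' : ∀ p, HasGradientAt f (f' p) p)
    (hsc : ∀ p q, f q ≥ f p + ⟪f' p, q - p⟫ + μ / 2 * ‖q - p‖ ^ 2)
    (xstar : EuclideanSpace ℝ (Fin n)) (hmin : ∀ p, f xstar ≤ f p)
    (x x' x'' : ℝ → EuclideanSpace ℝ (Fin n))
    (hx : ∀ t > (0:ℝ), HasDerivAt x (x' t) t)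
    (hx' : ∀ t > (0:ℝ), HasDerivAt x' (x'' t) t)
    (hode : ∀ t > (0:ℝ), x'' t + (r / t) • x' t + f' (x t) = 0) :
    ∃ C > (0:ℝ), ∀ t, Real.sqrt (2 * r ^ 2 / (9 * μ)) ≤ t →
      f (x t) - f xstar - (r ^ 2 - 3 * r) / (9 * t ^ 2) * ‖x t - xstar‖ ^ 2
        ≤ C * t ^ (-(2 * r / 3)) := by
  set T : ℝ := Real.sqrt (2 * r ^ 2 / (9 * μ)) with hTdef
  have hTpos : 0 < T := Real.sqrt_pos.mpr (by positivity)
  have hTsq : T ^ 2 = 2 * r ^ 2 / (9 * μ) := Real.sq_sqrt (by positivity)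
  set p : ℝ := 2 * r / 3 with hpdef
  set c : ℝ := 2 * r / 3 - 2 * r ^ 2 / 9 with hcdef
  set E : ℝ → ℝ := fun t =>
      t ^ p * (f (x t) - f xstar)
      + ((2*r/3)^2 + c)/2 * (t ^ (p-2) * ⟪x t - xstar, x t - xstar⟫)
      + (2*r/3) * (t ^ (p-1) * ⟪x t - xstar, x' t⟫)
      + (1/2) * (t ^ p * ⟪x' t, x' t⟫) with hEdef
  -- derivative of E
  have hE' : ∀ t : ℝ, 0 < t → HasDerivAt E
      ((2*r/3) * (t ^ (p-1) * ((f (x t) - f xstar) - ⟪x t - xstar, f' (x t)⟫))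
        + (2*r*(r^2-9)/27) * (t ^ (p-3) * ⟪x t - xstar, x t - xstar⟫)) t := by
    intro t ht
    have htne : t ≠ 0 := ht.ne'
    have hxd := hx t ht
    have hud : HasDerivAt (fun s => x s - xstar) (x' t) t := hxd.sub_const xstar
    have had : HasDerivAt (fun s => ⟪x s - xstar, x s - xstar⟫)
        (⟪x t - xstar, x' t⟫ + ⟪x' t, x t - xstar⟫) t := hud.inner ℝ hud
    have hbd : HasDerivAt (fun s => ⟪x s - xstar, x' s⟫)
        (⟪x t - xstar, x'' t⟫ + ⟪x' t, x' t⟫) t := hud.inner ℝ (hx' t ht)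
    have hdd : HasDerivAt (fun s => ⟪x' s, x' s⟫)
        (⟪x' t, x'' t⟫ + ⟪x'' t, x' t⟫) t := (hx' t ht).inner ℝ (hx' t ht)
    have hAd : HasDerivAt (fun s => f (x s) - f xstar) (⟪f' (x t), x' t⟫) t := by
      have h1 : HasFDerivAt f (InnerProductSpace.toDual ℝ _ (f' (x t))) (x t) :=
        (hf' (x t)).hasFDerivAt
      have h2 := h1.comp_hasDerivAt t hxd
      simpa [InnerProductSpace.toDual_apply_apply] using h2.sub_const (f xstar)
    have hrp : ∀ q : ℝ, HasDerivAt (fun s : ℝ => s ^ q) (q * t ^ (q-1)) t :=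
      fun q => Real.hasDerivAt_rpow_const (Or.inl htne)
    have hbig := ((((hrp p).mul hAd).add
        ((((hrp (p-2)).mul had)).const_mul (((2*r/3)^2 + c)/2))).add
        ((((hrp (p-1)).mul hbd)).const_mul (2*r/3))).add
        ((((hrp p).mul hdd)).const_mul (1/2))
    convert hbig using 1
    case e'_4 => rfl
    case e'_5 => rfl
    case e'_8 => rfl
    -- rewrite x'' via the ODE
    have hxx : x'' t = -((r / t) • x' t + f' (x t)) := by
      have h := hode t ht
      rw [add_assoc] at h
      exact eq_neg_of_add_eq_zero_left h
    rw [hxx]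
    -- reduce to a scalar identity
    have e1 : ⟪x' t, x t - xstar⟫ = ⟪x t - xstar, x' t⟫ := real_inner_comm _ _
    have e2 : ⟪f' (x t), x' t⟫ = ⟪x' t, f' (x t)⟫ := real_inner_comm _ _
    simp only [inner_neg_right, inner_neg_left, inner_add_right, inner_add_left,
      real_inner_smul_right, real_inner_smul_left, e1, e2]
    have r2 : t ^ (p-2) = t ^ (p-3) * t := by
      simpa using rpow_split t ht (p-2) (p-3) 1 (by push_cast; ring)
    have r1 : t ^ (p-1) = t ^ (p-3) * t ^ (2:ℕ) := by
      exact rpow_split t ht (p-1) (p-3) 2 (by push_cast; ring)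
    have r0 : t ^ p = t ^ (p-3) * t ^ (3:ℕ) := by
      exact rpow_split t ht p (p-3) 3 (by push_cast; ring)
    rw [show p-2-1 = p-3 by ring, show p-1-1 = p-2 by ring, r0, r1, r2]
    set aa := ⟪x t - xstar, x t - xstar⟫ with haa
    set bb := ⟪x t - xstar, x' t⟫ with hbb
    set dd := ⟪x' t, x' t⟫ with hdd
    set ee := ⟪x t - xstar, f' (x t)⟫ with hee
    set ww := ⟪x' t, f' (x t)⟫ with hww
    set s := t ^ (p-3) with hs
    rw [hpdef, hcdef]
    field_simp
    ring
  -- E is antitone on [T, ∞)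
  have hcont : ContinuousOn E (Set.Ici T) := fun s hs =>
    ((hE' s (hTpos.trans_le hs)).continuousAt).continuousWithinAt
  have hanti : AntitoneOn E (Set.Ici T) := by
    have hdiff : DifferentiableOn ℝ E (interior (Set.Ici T)) := by
      rw [interior_Ici]
      exact fun s hs => ((hE' s (hTpos.trans hs)).differentiableAt).differentiableWithinAt
    apply antitoneOn_of_deriv_nonpos (convex_Ici T) hcont hdiff
    intro t ht
    rw [interior_Ici] at ht
    have ht0 : 0 < t := hTpos.trans ht
    rw [(hE' t ht0).deriv]
    -- strong convexity bound
    have hscb : (f (x t) - f xstar) - ⟪x t - xstar, f' (x t)⟫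
        ≤ -(μ/2) * ⟪x t - xstar, x t - xstar⟫ := by
      have h := hsc (x t) xstar
      have e3 : ⟪f' (x t), xstar - x t⟫ = -⟪x t - xstar, f' (x t)⟫ := by
        rw [real_inner_comm, ← inner_neg_left, neg_sub]
      have e4 : ‖xstar - x t‖ ^ 2 = ⟪x t - xstar, x t - xstar⟫ := by
        rw [norm_sub_rev, ← real_inner_self_eq_norm_sq]
      rw [e3, e4] at h
      linarith
    have ha0 : (0:ℝ) ≤ ⟪x t - xstar, x t - xstar⟫ := real_inner_self_nonneg
    have hs0 : (0:ℝ) < t ^ (p-3) := Real.rpow_pos_of_pos ht0 _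
    have r1 : t ^ (p-1) = t ^ (p-3) * t ^ (2:ℕ) := by
      exact rpow_split t ht0 (p-1) (p-3) 2 (by push_cast; ring)
    set aa := ⟪x t - xstar, x t - xstar⟫ with haa
    set ee := ⟪x t - xstar, f' (x t)⟫ with hee
    rw [r1]
    have htT2 : 2 * r ^ 2 / (9 * μ) ≤ t ^ 2 := by
      rw [← hTsq]
      exact pow_le_pow_left₀ hTpos.le ht.le 2
    have hK : 2*r*(r^2-9)/27 ≤ (2*r/3) * (μ/2) * t ^ 2 := by
      have h1 : 2*r*(r^2-9)/27 ≤ 2*r^3/27 := by nlinarith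
      have h2 : (2*r/3) * (μ/2) * (2 * r ^ 2 / (9 * μ)) = 2*r^3/27 := by
        field_simp; ring
      have h3 := mul_le_mul_of_nonneg_left htT2 (by positivity : (0:ℝ) ≤ 2*r/3 * (μ/2))
      linarith
    nlinarith [mul_le_mul_of_nonneg_left hscb (by positivity : (0:ℝ) ≤ (2*r/3) * (t ^ (p-3) * t ^ 2)),
      mul_le_mul_of_nonneg_right hK (mul_nonneg hs0.le ha0)]
  -- conclude
  refine ⟨|E T| + 1, by positivity, fun t htT => ?_⟩
  have ht0 : 0 < t := hTpos.trans_le htT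
  have htp : 0 < t ^ p := Real.rpow_pos_of_pos ht0 _
  -- key pointwise bound : t^p * LHS ≤ E t
  have key1 : t ^ p * (f (x t) - f xstar - (r ^ 2 - 3 * r) / (9 * t ^ 2) * ‖x t - xstar‖ ^ 2)
      ≤ E t := by
    have hq : (0:ℝ) ≤ ⟪(2*r/3) • (x t - xstar) + t • x' t, (2*r/3) • (x t - xstar) + t • x' t⟫ :=
      real_inner_self_nonneg
    have hexp : ⟪(2*r/3) • (x t - xstar) + t • x' t, (2*r/3) • (x t - xstar) + t • x' t⟫
        = (2*r/3)^2 * ⟪x t - xstar, x t - xstar⟫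
          + 2*(2*r/3)*t * ⟪x t - xstar, x' t⟫ + t^2 * ⟪x' t, x' t⟫ := by
      simp only [inner_add_left, inner_add_right, real_inner_smul_left, real_inner_smul_right,
        real_inner_comm (x' t) (x t - xstar)]
      ring
    have hnorm : ‖x t - xstar‖ ^ 2 = ⟪x t - xstar, x t - xstar⟫ :=
      (real_inner_self_eq_norm_sq _).symm
    have r2 : t ^ p = t ^ (p-2) * t ^ (2:ℕ) := by
      exact rpow_split t ht0 p (p-2) 2 (by push_cast; ring)
    have hs0 : (0:ℝ) < t ^ (p-2) := Real.rpow_pos_of_pos ht0 _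
    rw [hexp] at hq
    rw [hnorm]
    have r1 : t ^ (p-1) = t ^ (p-2) * t := by
      simpa using rpow_split t ht0 (p-1) (p-2) 1 (by push_cast; ring)
    have hEt : E t = t ^ p * (f (x t) - f xstar)
        + ((2*r/3)^2 + c)/2 * (t ^ (p-2) * ⟪x t - xstar, x t - xstar⟫)
        + (2*r/3) * (t ^ (p-1) * ⟪x t - xstar, x' t⟫)
        + (1/2) * (t ^ p * ⟪x' t, x' t⟫) := by rw [hEdef]
    set aa := ⟪x t - xstar, x t - xstar⟫ with haa
    set bb := ⟪x t - xstar, x' t⟫ with hbb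
    set dd := ⟪x' t, x' t⟫ with hdd
    have heq : E t - t ^ p * (f (x t) - f xstar - (r ^ 2 - 3 * r) / (9 * t ^ 2) * aa)
        = 1/2 * t ^ (p-2) * ((2*r/3)^2 * aa + 2*(2*r/3)*t * bb + t^2 * dd) := by
      rw [hEt, hcdef, r2, r1]
      have htne : t ≠ 0 := ht0.ne'
      field_simp
      ring
    nlinarith [mul_le_mul_of_nonneg_left hq hs0.le]
  have key2 : E t ≤ E T := hanti Set.self_mem_Ici htT htT
  have hfin : f (x t) - f xstar - (r ^ 2 - 3 * r) / (9 * t ^ 2) * ‖x t - xstar‖ ^ 2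
      ≤ E T / t ^ p := by
    rw [le_div_iff₀ htp]
    calc _ = t ^ p * (f (x t) - f xstar - (r ^ 2 - 3 * r) / (9 * t ^ 2) * ‖x t - xstar‖ ^ 2) := by
          ring
      _ ≤ E t := key1
      _ ≤ E T := key2
  have hCp : E T / t ^ p ≤ (|E T| + 1) * t ^ (-p) := by
    rw [Real.rpow_neg ht0.le, div_eq_mul_inv]
    have : E T ≤ |E T| + 1 := (le_abs_self _).trans (by linarith)
    exact mul_le_mul_of_nonneg_right this (by positivity)
  calc f (x t) - f xstar - (r ^ 2 - 3 * r) / (9 * t ^ 2) * ‖x t - xstar‖ ^ 2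
      ≤ E T / t ^ p := hfin
    _ ≤ (|E T| + 1) * t ^ (-p) := hCp
end

section
/- For all t ≥ T := √(2r²/(9μ)), one has (1/2)·t^{2r/3}·‖ẋ(t) + (2r/(3t))·(x(t) − x_*)‖² ≤ E(T). -/
open scoped RealInnerProductSpace

set_option maxHeartbeats 1000000

/-- Inequality (18) in the proof of Lemma 5: for `t ≥ T := √(2r²/(9μ))`,
`(1/2) t^(2r/3) ‖ẋ(t) + (2r/(3t))(x t - x_*)‖² ≤ E(T)`. -/
theorem stmt_5
{n : ℕ} (μ r : ℝ) (hμ : 0 < μ) (hr : 0 < r)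
    (f : EuclideanSpace ℝ (Fin n) → ℝ)
    (f' : EuclideanSpace ℝ (Fin n) → EuclideanSpace ℝ (Fin n))
    (hf' : ∀ p, HasGradientAt f (f' p) p)
    (hsc : ∀ p q, f q ≥ f p + ⟪f' p, q - p⟫ + μ / 2 * ‖q - p‖ ^ 2)
    (xstar : EuclideanSpace ℝ (Fin n)) (hmin : ∀ p, f xstar ≤ f p)
    (x x' x'' : ℝ → EuclideanSpace ℝ (Fin n))
    (hx : ∀ t > (0:ℝ), HasDerivAt x (x' t) t)
    (hx' : ∀ t > (0:ℝ), HasDerivAt x' (x'' t) t)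
    (hode : ∀ t > (0:ℝ), x'' t + (r / t) • x' t + f' (x t) = 0)
(E : ℝ → ℝ)
    (hE : ∀ t, E t
        = t ^ (2 * r / 3) * (f (x t) - f xstar - (r ^ 2 - 3 * r) / (9 * t ^ 2) * ‖x t - xstar‖ ^ 2)
          + 1 / 2 * t ^ (2 * r / 3) * ‖x' t + (2 * r / (3 * t)) • (x t - xstar)‖ ^ 2) :
    ∀ t, Real.sqrt (2 * r ^ 2 / (9 * μ)) ≤ t →
      1 / 2 * t ^ (2 * r / 3) * ‖x' t + (2 * r / (3 * t)) • (x t - xstar)‖ ^ 2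
        ≤ E (Real.sqrt (2 * r ^ 2 / (9 * μ))) := by
  intro t ht
  set T := Real.sqrt (2 * r ^ 2 / (9 * μ)) with hTdef
  have hT2 : T ^ 2 = 2 * r ^ 2 / (9 * μ) := Real.sq_sqrt (by positivity)
  have hTpos : 0 < T := Real.sqrt_pos.2 (by positivity)
  have htpos : 0 < t := lt_of_lt_of_le hTpos ht
  -- gradient vanishes at the minimizer
  have hg0 : f' xstar = 0 := by
    have h1 : IsLocalMin f xstar := (isMinOn_univ_iff.2 hmin).isLocalMin (by simp)
    have h2 := h1.hasFDerivAt_eq_zero (hf' xstar).hasFDerivAt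
    have := congrArg (InnerProductSpace.toDual ℝ (EuclideanSpace ℝ (Fin n))).symm h2
    simpa using this
  -- strong convexity lower bound at the minimizer
  have hlow : ∀ p, μ / 2 * ‖p - xstar‖ ^ 2 ≤ f p - f xstar := by
    intro p
    have := hsc xstar p
    rw [hg0] at this
    simp only [inner_zero_left] at this
    linarith
  -- strong convexity upper bound
  have hup : ∀ p, f p - f xstar - ⟪f' p, p - xstar⟫ ≤ -(μ / 2) * ‖p - xstar‖ ^ 2 := by
    intro p
    have h := hsc p xstar
    have h1 : xstar - p = -(p - xstar) := by abel
    rw [h1, inner_neg_right, norm_neg] at h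
    linarith
  -- derivative of E
  have hderiv : ∀ s, 0 < s → HasDerivAt E
      (2 * r / 3 * s ^ (2 * r / 3 - 1) *
        ((f (x s) - f xstar) - ⟪f' (x s), x s - xstar⟫
          + (r ^ 2 - 9) / (9 * s ^ 2) * ‖x s - xstar‖ ^ 2)) s := by
    intro s hs
    have hEfun : E = fun s => s ^ (2 * r / 3) *
        (f (x s) - f xstar - (r ^ 2 - 3 * r) / (9 * s ^ 2) * ⟪x s - xstar, x s - xstar⟫)
        + 1 / 2 * s ^ (2 * r / 3) *
          ⟪x' s + (2 * r / (3 * s)) • (x s - xstar),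
           x' s + (2 * r / (3 * s)) • (x s - xstar)⟫ := by
      funext s
      rw [hE s, real_inner_self_eq_norm_sq, real_inner_self_eq_norm_sq]
    have hA : HasDerivAt (fun s : ℝ => s ^ (2 * r / 3)) (2 * r / 3 * s ^ (2 * r / 3 - 1)) s :=
      Real.hasDerivAt_rpow_const (Or.inl hs.ne')
    have hB : HasDerivAt (fun s => f (x s)) ⟪f' (x s), x' s⟫ s := by
      have := (hf' (x s)).hasFDerivAt.comp_hasDerivAt s (hx s hs)
      simp at this
      exact this
    have hC : HasDerivAt (fun s : ℝ => (r ^ 2 - 3 * r) / (9 * s ^ 2))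
        ((0 * (9 * s ^ 2) - (r ^ 2 - 3 * r) * (9 * (2 * s ^ 1))) / (9 * s ^ 2) ^ 2) s :=
      (hasDerivAt_const s (r ^ 2 - 3 * r)).div ((hasDerivAt_pow 2 s).const_mul 9)
        (by positivity)
    have hX : HasDerivAt (fun s => x s - xstar) (x' s) s := (hx s hs).sub_const xstar
    have hU : HasDerivAt (fun s => ⟪x s - xstar, x s - xstar⟫)
        (⟪x s - xstar, x' s⟫ + ⟪x' s, x s - xstar⟫) s := hX.inner ℝ hX
    have h3s : HasDerivAt (fun s : ℝ => 3 * s) 3 s := by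
      simpa using (hasDerivAt_id s).const_mul (3:ℝ)
    have hk : HasDerivAt (fun s : ℝ => 2 * r / (3 * s))
        ((0 * (3 * s) - 2 * r * 3) / (3 * s) ^ 2) s :=
      (hasDerivAt_const s (2 * r)).div h3s (by positivity)
    have hw : HasDerivAt (fun s => x' s + (2 * r / (3 * s)) • (x s - xstar))
        (x'' s + ((2 * r / (3 * s)) • x' s
          + ((0 * (3 * s) - 2 * r * 3) / (3 * s) ^ 2) • (x s - xstar))) s :=
      (hx' s hs).add (hk.smul hX)
    have hW := hw.inner ℝ hw
    have h1 := (hA.mul (((hB.sub_const (f xstar)).sub (hC.mul hU)))).add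
      ((hA.const_mul (1 / 2 : ℝ)).mul hW)
    rw [hEfun]
    convert h1 using 1
    · rfl
    · rfl
    · rfl
    -- substitute the ODE
    have hx''eq : x'' s = -((r / s) • x' s) + -(f' (x s)) := by
      have h0' : x'' s + ((r / s) • x' s + f' (x s)) = 0 := by
        rw [← add_assoc]; exact hode s hs
      rw [eq_neg_of_add_eq_zero_left h0', neg_add]
    rw [hx''eq, ← real_inner_self_eq_norm_sq]
    have hpow : s ^ (2 * r / 3 - 1) = s ^ (2 * r / 3) / s := by
      rw [Real.rpow_sub hs, Real.rpow_one]
    simp only [Pi.sub_apply, Pi.mul_apply]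
    simp only [inner_add_left, inner_add_right,
      inner_neg_left, inner_neg_right, real_inner_smul_left, real_inner_smul_right]
    simp only [real_inner_comm (x' s) (x s - xstar), real_inner_comm (x' s) (f' (x s)),
      real_inner_comm (x s - xstar) (f' (x s))]
    rw [hpow]
    set A := s ^ (2 * r / 3) with hA'
    set P : ℝ := ⟪f' (x s), x s - xstar⟫ with hP'
    set Q : ℝ := ⟪f' (x s), x' s⟫ with hQ'
    set R : ℝ := ⟪x s - xstar, x' s⟫ with hR'
    set U : ℝ := ⟪x s - xstar, x s - xstar⟫ with hU'
    set V : ℝ := ⟪x' s, x' s⟫ with hV'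
    field_simp
    ring
  -- E is antitone on [T, ∞)
  have hmono : AntitoneOn E (Set.Ici T) := by
    apply antitoneOn_of_deriv_nonpos (convex_Ici T)
    · intro s hs
      exact (hderiv s (lt_of_lt_of_le hTpos hs)).continuousAt.continuousWithinAt
    · intro s hs
      rw [interior_Ici] at hs
      exact (hderiv s (hTpos.trans hs)).differentiableAt.differentiableWithinAt
    · intro s hs
      rw [interior_Ici] at hs
      have hspos : 0 < s := hTpos.trans hs
      rw [(hderiv s hspos).deriv]
      have hs2 : T ^ 2 ≤ s ^ 2 := by nlinarith [le_of_lt (show T < s from hs)]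
      have hd : (r ^ 2 - 9) / (9 * s ^ 2) ≤ μ / 2 := by
        rw [div_le_iff₀ (by positivity)]
        have : 2 * r ^ 2 / (9 * μ) ≤ s ^ 2 := hT2 ▸ hs2
        rw [div_le_iff₀ (by positivity)] at this
        nlinarith
      have hU : (0:ℝ) ≤ ‖x s - xstar‖ ^ 2 := by positivity
      have hZ : (f (x s) - f xstar) - ⟪f' (x s), x s - xstar⟫
          + (r ^ 2 - 9) / (9 * s ^ 2) * ‖x s - xstar‖ ^ 2 ≤ 0 := by
        have := hup (x s)
        nlinarith
      have hpos : (0:ℝ) ≤ 2 * r / 3 * s ^ (2 * r / 3 - 1) := by positivity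
      exact mul_nonpos_of_nonneg_of_nonpos hpos hZ
  have hEt : E t ≤ E T := hmono Set.self_mem_Ici ht ht
  -- the potential part of E is nonnegative at t
  have hc : (r ^ 2 - 3 * r) / (9 * t ^ 2) ≤ μ / 2 := by
    have hs2 : T ^ 2 ≤ t ^ 2 := by nlinarith
    rw [div_le_iff₀ (by positivity)]
    have h3 : 2 * r ^ 2 / (9 * μ) ≤ t ^ 2 := hT2 ▸ hs2
    rw [div_le_iff₀ (by positivity)] at h3
    nlinarith
  have hU : (0:ℝ) ≤ ‖x t - xstar‖ ^ 2 := by positivity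
  have hfirst : 0 ≤ t ^ (2 * r / 3) *
      (f (x t) - f xstar - (r ^ 2 - 3 * r) / (9 * t ^ 2) * ‖x t - xstar‖ ^ 2) := by
    have hgl := hlow (x t)
    have : 0 ≤ f (x t) - f xstar - (r ^ 2 - 3 * r) / (9 * t ^ 2) * ‖x t - xstar‖ ^ 2 := by
      nlinarith
    positivity
  have := hE t
  linarith
end

section
/- Define y(t) = t^{2r/3}·(x(t) − x_*). Then for all t > 0, ẏ(t) = t^{2r/3}·( ẋ(t) + (2r/(3t))·(x(t) − x_*) ), and consequently ‖ẏ(t)‖ ≤ √(2·E(T)) · t^{r/3} for all t ≥ T := √(2r²/(9μ)). -/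
open scoped RealInnerProductSpace

set_option maxHeartbeats 1000000 in
/-- Equations (19)–(20) in the proof of Lemma 5: with `y t = t^(2r/3) • (x t - x_*)`,
`ẏ(t) = t^(2r/3) • (ẋ(t) + (2r/(3t)) • (x t - x_*))` for `t > 0`, and
`‖ẏ(t)‖ ≤ √(2 E(T)) * t^(r/3)` for `t ≥ T := √(2r²/(9μ))`. -/
theorem stmt_6
{n : ℕ} (μ r : ℝ) (hμ : 0 < μ) (hr : 0 < r)
    (f : EuclideanSpace ℝ (Fin n) → ℝ)
    (f' : EuclideanSpace ℝ (Fin n) → EuclideanSpace ℝ (Fin n))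
    (hf' : ∀ p, HasGradientAt f (f' p) p)
    (hsc : ∀ p q, f q ≥ f p + ⟪f' p, q - p⟫ + μ / 2 * ‖q - p‖ ^ 2)
    (xstar : EuclideanSpace ℝ (Fin n)) (hmin : ∀ p, f xstar ≤ f p)
    (x x' x'' : ℝ → EuclideanSpace ℝ (Fin n))
    (hx : ∀ t > (0:ℝ), HasDerivAt x (x' t) t)
    (hx' : ∀ t > (0:ℝ), HasDerivAt x' (x'' t) t)
    (hode : ∀ t > (0:ℝ), x'' t + (r / t) • x' t + f' (x t) = 0)
(E : ℝ → ℝ)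
    (hE : ∀ t, E t
        = t ^ (2 * r / 3) * (f (x t) - f xstar - (r ^ 2 - 3 * r) / (9 * t ^ 2) * ‖x t - xstar‖ ^ 2)
          + 1 / 2 * t ^ (2 * r / 3) * ‖x' t + (2 * r / (3 * t)) • (x t - xstar)‖ ^ 2) :
    (∀ t > (0:ℝ), HasDerivAt (fun s : ℝ => s ^ (2 * r / 3) • (x s - xstar))
      (t ^ (2 * r / 3) • (x' t + (2 * r / (3 * t)) • (x t - xstar))) t) ∧
    (∀ t, Real.sqrt (2 * r ^ 2 / (9 * μ)) ≤ t →
      ‖t ^ (2 * r / 3) • (x' t + (2 * r / (3 * t)) • (x t - xstar))‖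
        ≤ Real.sqrt (2 * E (Real.sqrt (2 * r ^ 2 / (9 * μ)))) * t ^ (r / 3)) := by
  -- the derivative of E
  have hDeriv : ∀ t > (0:ℝ), HasDerivAt E (t ^ (2 * r / 3) / t *
      ((2 * r / 3) * (f (x t) - f xstar - ⟪f' (x t), x t - xstar⟫)
        + (2 * r * (r ^ 2 - 9) / 27) / t ^ 2 * ‖x t - xstar‖ ^ 2)) t := by
    intro t ht
    have hEfun : E = fun s : ℝ =>
        s ^ (2 * r / 3) * (f (x s) - f xstar - (r ^ 2 - 3 * r) / (9 * s ^ 2) * ‖x s - xstar‖ ^ 2)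
          + 1 / 2 * s ^ (2 * r / 3) * ‖x' s + (2 * r / (3 * s)) • (x s - xstar)‖ ^ 2 :=
      funext hE
    have h1 : HasDerivAt (fun s : ℝ => s ^ (2 * r / 3)) ((2 * r / 3) * t ^ (2 * r / 3 - 1)) t :=
      Real.hasDerivAt_rpow_const (Or.inl ht.ne')
    have hu : HasDerivAt (fun s => x s - xstar) (x' t) t := (hx t ht).sub_const xstar
    have hg : HasDerivAt (fun s => f (x s) - f xstar) ⟪f' (x t), x' t⟫ t := by
      have h0 := ((hf' (x t)).hasFDerivAt.comp_hasDerivAt t (hx t ht)).sub_const (f xstar)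
      simpa using h0
    have hq : HasDerivAt (fun s => ‖x s - xstar‖ ^ 2) (2 * ⟪x' t, x t - xstar⟫) t := by
      have h0 := hu.inner ℝ hu
      simp only [real_inner_self_eq_norm_sq] at h0
      refine h0.congr_deriv ?_
      rw [real_inner_comm]; ring
    have hden : HasDerivAt (fun s : ℝ => 9 * s ^ 2) (9 * (2 * t)) t := by
      simpa using (hasDerivAt_pow 2 t).const_mul (9:ℝ)
    have hk : HasDerivAt (fun s : ℝ => (r ^ 2 - 3 * r) / (9 * s ^ 2))
        ((0 * (9 * t ^ 2) - (r ^ 2 - 3 * r) * (9 * (2 * t))) / (9 * t ^ 2) ^ 2) t :=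
      (hasDerivAt_const t (r ^ 2 - 3 * r)).div hden (by positivity)
    have hc : HasDerivAt (fun s : ℝ => 2 * r / (3 * s))
        ((0 * (3 * t) - 2 * r * 3) / (3 * t) ^ 2) t :=
      (hasDerivAt_const t (2 * r)).div (by simpa using (hasDerivAt_id t).const_mul (3:ℝ))
        (by positivity)
    have hv := (hx' t ht).add (hc.smul hu)
    have hN := hv.inner ℝ hv
    simp only [real_inner_self_eq_norm_sq] at hN
    have hA := h1.mul (hg.sub (hk.mul hq))
    have hB := (h1.const_mul (1/2 : ℝ)).mul hN
    have hAB := hA.add hB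
    rw [hEfun]
    refine hAB.congr_deriv ?_
    simp only [Pi.add_apply, Pi.sub_apply, Pi.mul_apply, Pi.smul_apply, Pi.smul_apply']
    have hxx : x'' t = -((r / t) • x' t) - f' (x t) := by
      have h0 := hode t ht
      have h1' : x'' t + ((r / t) • x' t + f' (x t)) = 0 := by
        rw [← add_assoc]; exact h0
      rw [add_eq_zero_iff_eq_neg] at h1'
      rw [h1']; abel
    rw [hxx]
    rw [Real.rpow_sub_one ht.ne']
    have hvexp : ‖x' t + (2 * r / (3 * t)) • (x t - xstar)‖ ^ 2
        = ‖x' t‖ ^ 2 + 2 * (2 * r / (3 * t)) * ⟪x' t, x t - xstar⟫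
          + (2 * r / (3 * t)) ^ 2 * ‖x t - xstar‖ ^ 2 := by
      rw [norm_add_sq_real, real_inner_smul_right, norm_smul, mul_pow, Real.norm_eq_abs, sq_abs]
      ring
    rw [hvexp]
    set F := f' (x t) with hF
    set A := x' t with hA2
    set B := x t - xstar with hB2
    simp only [inner_add_left, inner_add_right, inner_smul_left, inner_smul_right,
      inner_sub_left, inner_sub_right, inner_neg_left, inner_neg_right, real_inner_self_eq_norm_sq,
      RCLike.ofReal_real_eq_id, id_eq, conj_trivial]
    simp only [real_inner_comm B A, real_inner_comm B F, real_inner_comm A F]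
    field_simp
    ring
  -- part 1
  have part1 : ∀ t > (0:ℝ), HasDerivAt (fun s : ℝ => s ^ (2 * r / 3) • (x s - xstar))
      (t ^ (2 * r / 3) • (x' t + (2 * r / (3 * t)) • (x t - xstar))) t := by
    intro t ht
    have hpow : HasDerivAt (fun s : ℝ => s ^ (2 * r / 3)) ((2 * r / 3) * t ^ (2 * r / 3 - 1)) t :=
      Real.hasDerivAt_rpow_const (Or.inl ht.ne')
    have hu : HasDerivAt (fun s => x s - xstar) (x' t) t := (hx t ht).sub_const xstar
    have h := hpow.smul hu
    have hs : t ^ (2*r/3) * (2*r/(3*t)) = 2*r/3 * t ^ (2*r/3 - 1) := by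
      rw [Real.rpow_sub_one ht.ne']; field_simp
    refine h.congr_deriv ?_
    rw [smul_add, smul_smul, hs, add_comm]
  refine ⟨part1, ?_⟩
  -- setup for part 2
  set T := Real.sqrt (2 * r ^ 2 / (9 * μ)) with hT
  have hT2 : T ^ 2 = 2 * r ^ 2 / (9 * μ) := Real.sq_sqrt (by positivity)
  have hTpos : 0 < T := Real.sqrt_pos.mpr (by positivity)
  -- gradient at minimizer is zero
  have hfstar : f' xstar = 0 := by
    have hloc : IsLocalMin f xstar := Filter.Eventually.of_forall hmin
    have h0 := hloc.hasFDerivAt_eq_zero (hf' xstar).hasFDerivAt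
    have := congrArg (fun L => (InnerProductSpace.toDual ℝ (EuclideanSpace ℝ (Fin n))).symm L) h0
    simpa using this
  -- strong convexity facts
  have hlow : ∀ t : ℝ, μ / 2 * ‖x t - xstar‖ ^ 2 ≤ f (x t) - f xstar := by
    intro t
    have h0 := hsc xstar (x t)
    rw [hfstar] at h0
    simp only [inner_zero_left] at h0
    linarith
  have hGI : ∀ t : ℝ, f (x t) - f xstar - ⟪f' (x t), x t - xstar⟫
      ≤ - (μ / 2) * ‖x t - xstar‖ ^ 2 := by
    intro t
    have h0 := hsc (x t) xstar
    have h1 : xstar - x t = -(x t - xstar) := by abel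
    rw [h1, inner_neg_right, norm_neg] at h0
    linarith
  -- derivative nonpositive on Ioi T
  have hderiv_nonpos : ∀ t, T ≤ t → deriv E t = t ^ (2 * r / 3) / t *
      ((2 * r / 3) * (f (x t) - f xstar - ⟪f' (x t), x t - xstar⟫)
        + (2 * r * (r ^ 2 - 9) / 27) / t ^ 2 * ‖x t - xstar‖ ^ 2) := by
    intro t htT
    exact (hDeriv t (lt_of_lt_of_le hTpos htT)).deriv
  have hEanti : AntitoneOn E (Set.Ici T) := by
    apply antitoneOn_of_deriv_nonpos (convex_Ici T)
    · intro t htT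
      exact (hDeriv t (lt_of_lt_of_le hTpos htT)).continuousAt.continuousWithinAt
    · intro t htT
      rw [interior_Ici] at htT
      exact ((hDeriv t (hTpos.trans htT)).differentiableAt).differentiableWithinAt
    · intro t htT
      rw [interior_Ici] at htT
      have ht : 0 < t := hTpos.trans htT
      rw [(hDeriv t ht).deriv]
      have hQ : (0:ℝ) ≤ ‖x t - xstar‖ ^ 2 := by positivity
      have hgi := hGI t
      have ht2 : 2 * r ^ 2 / (9 * μ) ≤ t ^ 2 := by
        rw [← hT2]; exact pow_le_pow_left₀ hTpos.le htT.le 2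
      have hPpos : (0:ℝ) < t ^ (2 * r / 3) / t := by positivity
      have hbr : (2 * r / 3) * (f (x t) - f xstar - ⟪f' (x t), x t - xstar⟫)
          + (2 * r * (r ^ 2 - 9) / 27) / t ^ 2 * ‖x t - xstar‖ ^ 2 ≤ 0 := by
        have ht2pos : (0:ℝ) < t ^ 2 := by positivity
        have ht2μ : 2 * r ^ 2 ≤ 9 * μ * t ^ 2 := by
          rw [div_le_iff₀ (by positivity)] at ht2; linarith
        have key : (2 * r * (r ^ 2 - 9) / 27) / t ^ 2 * ‖x t - xstar‖ ^ 2
            ≤ (μ * r / 3) * ‖x t - xstar‖ ^ 2 := by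
          rw [div_mul_eq_mul_div, div_le_iff₀ ht2pos]
          nlinarith [mul_le_mul_of_nonneg_left ht2μ (mul_nonneg hr.le hQ),
            mul_nonneg hr.le hQ]
        have h2 : (2 * r / 3) * (f (x t) - f xstar - ⟪f' (x t), x t - xstar⟫)
            ≤ - (μ * r / 3) * ‖x t - xstar‖ ^ 2 := by
          nlinarith [mul_le_mul_of_nonneg_left hgi (by positivity : (0:ℝ) ≤ 2 * r / 3)]
        linarith
      exact mul_nonpos_of_nonneg_of_nonpos hPpos.le hbr
  -- conclusion
  intro t htT
  have ht : 0 < t := hTpos.trans_le htT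
  have hEt : E t ≤ E T := hEanti (Set.self_mem_Ici) htT htT
  -- lower bound on E t
  have hkey : ∀ s, T ≤ s → 1 / 2 * s ^ (2 * r / 3) * ‖x' s + (2 * r / (3 * s)) • (x s - xstar)‖ ^ 2
      ≤ E s := by
    intro s hsT
    have hs : 0 < s := hTpos.trans_le hsT
    rw [hE s]
    have hs2 : 2 * r ^ 2 / (9 * μ) ≤ s ^ 2 := by
      rw [← hT2]; exact pow_le_pow_left₀ hTpos.le hsT 2
    have hQ : (0:ℝ) ≤ ‖x s - xstar‖ ^ 2 := by positivity
    have hP : (0:ℝ) < s ^ (2 * r / 3) := Real.rpow_pos_of_pos hs _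
    have hlb := hlow s
    have hnn : 0 ≤ f (x s) - f xstar - (r ^ 2 - 3 * r) / (9 * s ^ 2) * ‖x s - xstar‖ ^ 2 := by
      have hs2pos : (0:ℝ) < s ^ 2 := by positivity
      have hs2μ : 2 * r ^ 2 ≤ 9 * μ * s ^ 2 := by
        rw [div_le_iff₀ (by positivity)] at hs2; linarith
      have hk2 : (r ^ 2 - 3 * r) / (9 * s ^ 2) * ‖x s - xstar‖ ^ 2 ≤ μ / 2 * ‖x s - xstar‖ ^ 2 := by
        rw [div_mul_eq_mul_div, div_le_iff₀ (by positivity)]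
        nlinarith [mul_le_mul_of_nonneg_left hs2μ hQ, mul_nonneg hr.le hQ]
      linarith
    nlinarith [mul_nonneg hP.le hnn]
  have hET_nonneg : 0 ≤ E T := by
    have := hkey T le_rfl
    have hP : (0:ℝ) < T ^ (2 * r / 3) := Real.rpow_pos_of_pos hTpos _
    nlinarith [sq_nonneg ‖x' T + (2 * r / (3 * T)) • (x T - xstar)‖]
  -- final bound
  set v := x' t + (2 * r / (3 * t)) • (x t - xstar) with hv
  have hnormy : ‖t ^ (2 * r / 3) • v‖ = t ^ (2 * r / 3) * ‖v‖ := by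
    rw [norm_smul, Real.norm_eq_abs, abs_of_pos (Real.rpow_pos_of_pos ht _)]
  have hvE : t ^ (2 * r / 3) * ‖v‖ ^ 2 ≤ 2 * E T := by
    have h1 := hkey t htT
    linarith
  have hsq : (t ^ (2 * r / 3) * ‖v‖) ^ 2 ≤ (2 * E T) * (t ^ (r / 3)) ^ 2 := by
    have hexp : (t ^ (2 * r / 3)) ^ 2 = t ^ (2 * r / 3) * (t ^ (r / 3)) ^ 2 := by
      rw [← Real.rpow_natCast (t ^ (2 * r / 3)) 2, ← Real.rpow_natCast (t ^ (r / 3)) 2,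
        ← Real.rpow_mul ht.le, ← Real.rpow_mul ht.le, ← Real.rpow_add ht]
      norm_num
      ring_nf
    have hP : (0:ℝ) ≤ (t ^ (r / 3)) ^ 2 := by positivity
    calc (t ^ (2 * r / 3) * ‖v‖) ^ 2 = (t ^ (2 * r / 3) * ‖v‖ ^ 2) * (t ^ (r / 3)) ^ 2 := by
          rw [mul_pow, hexp]; ring
      _ ≤ (2 * E T) * (t ^ (r / 3)) ^ 2 := by
          apply mul_le_mul_of_nonneg_right hvE hP
  rw [hnormy]
  have hfin : t ^ (2 * r / 3) * ‖v‖ ≤ Real.sqrt ((2 * E T) * (t ^ (r / 3)) ^ 2) := by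
    rw [← Real.sqrt_sq (by positivity : (0:ℝ) ≤ t ^ (2 * r / 3) * ‖v‖)]
    exact Real.sqrt_le_sqrt hsq
  calc t ^ (2 * r / 3) * ‖v‖ ≤ Real.sqrt ((2 * E T) * (t ^ (r / 3)) ^ 2) := hfin
    _ = Real.sqrt (2 * E T) * t ^ (r / 3) := by
        rw [Real.sqrt_mul (by linarith) , Real.sqrt_sq (by positivity)]
end

section
/- There exists a constant C > 0 such that for all t ≥ T := √(2r²/(9μ)), ((r² − 3r)/(9t²))·‖x(t) − x_*‖² ≤ C · t^{−2r/3}. -/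
open scoped RealInnerProductSpace

set_option maxHeartbeats 2000000 in
/-- Lemma 5: for `t ≥ T := √(2r²/(9μ))`,
`((r² - 3r)/(9t²)) ‖x t - x_*‖² = O(t^(-2r/3))`. -/
theorem stmt_8
{n : ℕ} (μ r : ℝ) (hμ : 0 < μ) (hr : 0 < r)
    (f : EuclideanSpace ℝ (Fin n) → ℝ)
    (f' : EuclideanSpace ℝ (Fin n) → EuclideanSpace ℝ (Fin n))
    (hf' : ∀ p, HasGradientAt f (f' p) p)
    (hsc : ∀ p q, f q ≥ f p + ⟪f' p, q - p⟫ + μ / 2 * ‖q - p‖ ^ 2)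
    (xstar : EuclideanSpace ℝ (Fin n)) (hmin : ∀ p, f xstar ≤ f p)
    (x x' x'' : ℝ → EuclideanSpace ℝ (Fin n))
    (hx : ∀ t > (0:ℝ), HasDerivAt x (x' t) t)
    (hx' : ∀ t > (0:ℝ), HasDerivAt x' (x'' t) t)
    (hode : ∀ t > (0:ℝ), x'' t + (r / t) • x' t + f' (x t) = 0)
    (hx0 : ContinuousWithinAt x (Set.Ici 0) 0) :
    ∃ C > (0:ℝ), ∀ t, Real.sqrt (2 * r ^ 2 / (9 * μ)) ≤ t →
      (r ^ 2 - 3 * r) / (9 * t ^ 2) * ‖x t - xstar‖ ^ 2 ≤ C * t ^ (-(2 * r / 3)) := by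
  have hT2pos : (0:ℝ) < 2 * r ^ 2 / (9 * μ) := by positivity
  set T := Real.sqrt (2 * r ^ 2 / (9 * μ)) with hTdef
  have hTpos : 0 < T := Real.sqrt_pos.mpr hT2pos
  have hT2 : T ^ 2 = 2 * r ^ 2 / (9 * μ) := Real.sq_sqrt hT2pos.le
  rcases le_or_gt r 3 with h3 | h3
  · refine ⟨1, one_pos, fun t ht => ?_⟩
    have htpos : 0 < t := lt_of_lt_of_le hTpos ht
    have h1 : (r ^ 2 - 3 * r) / (9 * t ^ 2) * ‖x t - xstar‖ ^ 2 ≤ 0 := by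
      apply mul_nonpos_of_nonpos_of_nonneg
      · apply div_nonpos_of_nonpos_of_nonneg
        · nlinarith
        · positivity
      · positivity
    have h2 : (0:ℝ) < t ^ (-(2 * r / 3)) := Real.rpow_pos_of_pos htpos _
    linarith
  · -- main case r > 3
    have hgrad0 : f' xstar = 0 := by
      have hloc : IsLocalMin f xstar := Filter.Eventually.of_forall hmin
      have h0 := hloc.hasFDerivAt_eq_zero (hf' xstar).hasFDerivAt
      have h1 := congrArg (fun L => (InnerProductSpace.toDual ℝ (EuclideanSpace ℝ (Fin n))).symm L) h0
      simpa using h1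
    have hsc2 : ∀ p, f xstar + μ/2 * ‖p - xstar‖^2 ≤ f p := by
      intro p
      have h := hsc xstar p
      rw [hgrad0] at h
      simp only [inner_zero_left] at h
      linarith
    have hPineq : ∀ s : ℝ, f (x s) - f xstar + μ/2 * ⟪x s - xstar, x s - xstar⟫
        ≤ ⟪f' (x s), x s - xstar⟫ := by
      intro s
      have h := hsc (x s) xstar
      have h2 : ⟪f' (x s), xstar - x s⟫ = - ⟪f' (x s), x s - xstar⟫ := by
        rw [← inner_neg_right, neg_sub]
      rw [h2, norm_sub_rev] at h
      have h4 : ⟪x s - xstar, x s - xstar⟫ = ‖x s - xstar‖^2 := real_inner_self_eq_norm_sq _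
      rw [h4]
      linarith
    set En : ℝ → ℝ := fun u =>
      (f (x u) - f xstar)
      + (1/2) * ⟪(2*r/3 * u⁻¹) • (x u - xstar) + x' u, (2*r/3 * u⁻¹) • (x u - xstar) + x' u⟫
      + (r*(3-r)/9 * (u^2)⁻¹) * ⟪x u - xstar, x u - xstar⟫ with hEnDef
    have hEder : ∀ s : ℝ, 0 < s → HasDerivAt (fun u => u ^ (2*r/3:ℝ) * En u)
        (s ^ ((2*r/3:ℝ)-1) * (2*r/3 * (f (x s) - f xstar - ⟪f' (x s), x s - xstar⟫)
          + (2*r*(r^2-9)/27) * (⟪x s - xstar, x s - xstar⟫ / s^2))) s := by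
      intro s hs
      have hv : HasDerivAt (fun u => x u - xstar) (x' s) s := (hx s hs).sub_const _
      have hfx : HasDerivAt (fun u => f (x u)) ⟪f' (x s), x' s⟫ s := by
        have h := ((hf' (x s)).hasFDerivAt).comp_hasDerivAt s (hx s hs)
        exact h
      have hcoef : HasDerivAt (fun u => 2*r/3 * u⁻¹) (2*r/3 * -(s^2)⁻¹) s :=
        (hasDerivAt_inv hs.ne').const_mul (2*r/3)
      have hc2 : HasDerivAt (fun u => r*(3-r)/9 * ((u^2)⁻¹))
          (r*(3-r)/9 * (-(2 * s ^ 1) / (s^2)^2)) s :=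
        ((hasDerivAt_pow 2 s).inv (pow_ne_zero 2 hs.ne')).const_mul (r*(3-r)/9)
      have hw := (hcoef.smul hv).add (hx' s hs)
      have hE := ((hfx.sub_const (f xstar)).add
          ((HasDerivAt.inner ℝ hw hw).const_mul (1/2))).add
          (hc2.mul (HasDerivAt.inner ℝ hv hv))
      have hG := (Real.hasDerivAt_rpow_const (p := (2*r/3:ℝ)) (Or.inl hs.ne')).mul hE
      rw [hEnDef]
      convert hG using 1
      · rfl
      · rfl
      · rfl
      have hxdd : x'' s = -((r/s) • x' s) - f' (x s) := by
        have h := hode s hs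
        rw [add_assoc] at h
        rw [eq_neg_of_add_eq_zero_left h, neg_add]
        abel
      rw [hxdd]
      have hrw : s ^ (2*r/3 : ℝ) = s ^ ((2*r/3 : ℝ)-1) * s := by
        conv_lhs => rw [show (2*r/3:ℝ) = (2*r/3 - 1) + 1 by ring]
        rw [Real.rpow_add hs, Real.rpow_one]
      rw [hrw]
      simp only [Pi.add_apply, Pi.smul_apply', Pi.mul_apply]
      simp only [inner_add_left, inner_add_right, inner_sub_left, inner_sub_right,
        inner_neg_left, inner_neg_right, real_inner_smul_left, real_inner_smul_right,
        real_inner_comm (x' s) (x s - xstar), real_inner_comm (x s - xstar) (f' (x s)),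
        real_inner_comm (x' s) (f' (x s))]
      field_simp
      ring
    have hanti : AntitoneOn (fun u => u ^ (2*r/3:ℝ) * En u) (Set.Ici T) := by
      apply antitoneOn_of_deriv_nonpos (convex_Ici T)
      · intro u hu
        exact ((hEder u (hTpos.trans_le hu)).continuousAt).continuousWithinAt
      · intro u hu
        rw [interior_Ici] at hu
        exact ((hEder u (hTpos.trans hu)).differentiableAt).differentiableWithinAt
      · intro u hu
        rw [interior_Ici] at hu
        have hupos : 0 < u := hTpos.trans hu
        rw [(hEder u hupos).deriv]
        have hVnn : (0:ℝ) ≤ ⟪x u - xstar, x u - xstar⟫ := real_inner_self_nonneg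
        have hu2 : 2*r^2/(9*μ) ≤ u^2 := by
          rw [← hT2]; exact pow_le_pow_left₀ hTpos.le hu.le 2
        have hu2' : 2*r^2 ≤ 9*μ*u^2 := by
          rw [div_le_iff₀ (by positivity)] at hu2; linarith
        have hP := hPineq u
        have hP' : f (x u) - f xstar - ⟪f' (x u), x u - xstar⟫
            ≤ -(μ/2) * ⟪x u - xstar, x u - xstar⟫ := by linarith
        have H2 : 2*r^2 * (⟪x u - xstar, x u - xstar⟫ / u^2)
            ≤ 9*μ*⟪x u - xstar, x u - xstar⟫ := by
          rw [← mul_div_assoc, div_le_iff₀ (by positivity)]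
          nlinarith [mul_le_mul_of_nonneg_right hu2' hVnn]
        have hmain : 2*r/3 * (f (x u) - f xstar - ⟪f' (x u), x u - xstar⟫)
            + (2*r*(r^2-9)/27) * (⟪x u - xstar, x u - xstar⟫ / u^2) ≤ 0 := by
          have hint1 := mul_le_mul_of_nonneg_left hP' (by positivity : (0:ℝ) ≤ 2*r^2/3)
          have hint2 := mul_le_mul_of_nonneg_left H2
            (by nlinarith : (0:ℝ) ≤ (r^2-9)/27)
          have hmuV : 0 ≤ μ * ⟪x u - xstar, x u - xstar⟫ := mul_nonneg hμ.le hVnn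
          nlinarith [hint1, hint2, hmuV, hr]
        exact mul_nonpos_of_nonneg_of_nonpos (Real.rpow_pos_of_pos hupos _).le hmain
    set C0 := T ^ (2*r/3:ℝ) * En T with hC0
    have hEnLB : ∀ u, T ≤ u → 3*μ/(2*r) * ⟪x u - xstar, x u - xstar⟫ ≤ En u := by
      intro u hu
      have hupos : 0 < u := hTpos.trans_le hu
      have hVnn : (0:ℝ) ≤ ⟪x u - xstar, x u - xstar⟫ := real_inner_self_nonneg
      have h1 : μ/2 * ⟪x u - xstar, x u - xstar⟫ ≤ f (x u) - f xstar := by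
        have h := hsc2 (x u)
        rw [real_inner_self_eq_norm_sq]
        linarith
      have h2 : (0:ℝ) ≤ ⟪(2*r/3 * u⁻¹) • (x u - xstar) + x' u,
          (2*r/3 * u⁻¹) • (x u - xstar) + x' u⟫ := real_inner_self_nonneg
      have hu2 : T^2 ≤ u^2 := pow_le_pow_left₀ hTpos.le hu 2
      have hinv : (u^2)⁻¹ ≤ (T^2)⁻¹ := by
        apply inv_anti₀ (by positivity) hu2
      have hbneg : r*(3-r)/9 ≤ 0 := by nlinarith
      have h3' : (r*(3-r)/9) * (T^2)⁻¹ * ⟪x u - xstar, x u - xstar⟫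
          ≤ (r*(3-r)/9 * (u^2)⁻¹) * ⟪x u - xstar, x u - xstar⟫ := by
        apply mul_le_mul_of_nonneg_right _ hVnn
        exact mul_le_mul_of_nonpos_left hinv hbneg
      have hTval : (r*(3-r)/9) * (T^2)⁻¹ = (3-r)*μ/(2*r) := by
        rw [hT2]; field_simp
      rw [hTval] at h3'
      rw [hEnDef]
      simp only
      have hfin : 3*μ/(2*r) = μ/2 + (3-r)*μ/(2*r) := by field_simp; ring
      nlinarith [h1, h2, h3']
    have hC0nn : 0 ≤ C0 := by
      have h := hEnLB T le_rfl
      have hp : (0:ℝ) < T ^ (2*r/3:ℝ) := Real.rpow_pos_of_pos hTpos _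
      have hVnn : (0:ℝ) ≤ ⟪x T - xstar, x T - xstar⟫ := real_inner_self_nonneg
      have h0 : 0 ≤ En T := le_trans (by positivity) h
      rw [hC0]
      positivity
    have hKnn : 0 ≤ (r^2-3*r)/9 * (T^2)⁻¹ * (2*r/(3*μ) * C0) := by
      apply mul_nonneg (mul_nonneg (by nlinarith) (by positivity))
      apply mul_nonneg (by positivity) hC0nn
    refine ⟨(r^2-3*r)/9 * (T^2)⁻¹ * (2*r/(3*μ) * C0) + 1, by linarith, fun t ht => ?_⟩
    have htpos : 0 < t := hTpos.trans_le ht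
    have hVnn : (0:ℝ) ≤ ⟪x t - xstar, x t - xstar⟫ := real_inner_self_nonneg
    have hmono : t ^ (2*r/3:ℝ) * En t ≤ C0 :=
      hanti Set.self_mem_Ici (Set.mem_Ici.mpr ht) ht
    have hpow : (0:ℝ) < t ^ (2*r/3 : ℝ) := Real.rpow_pos_of_pos htpos _
    have hEB : En t ≤ C0 * t ^ (-(2*r/3) : ℝ) := by
      rw [Real.rpow_neg htpos.le, ← div_eq_mul_inv, le_div_iff₀ hpow]
      linarith [hmono]
    have hV : ⟪x t - xstar, x t - xstar⟫ ≤ 2*r/(3*μ) * (C0 * t ^ (-(2*r/3):ℝ)) := by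
      have h := le_trans (hEnLB t ht) hEB
      have hc := mul_le_mul_of_nonneg_left h (by positivity : (0:ℝ) ≤ 2*r/(3*μ))
      have hid : (2*r/(3*μ)) * (3*μ/(2*r) * ⟪x t - xstar, x t - xstar⟫)
          = ⟪x t - xstar, x t - xstar⟫ := by field_simp
      linarith [hc, hid.ge, hid.le]
    have hgoal2 : (r^2 - 3*r) / (9*t^2) * ⟪x t - xstar, x t - xstar⟫
        ≤ ((r^2-3*r)/9 * (T^2)⁻¹ * (2*r/(3*μ) * C0) + 1) * t ^ (-(2*r/3):ℝ) := by
      have hq0 : (r^2-3*r)/(9*t^2) ≤ (r^2-3*r)/9 * (T^2)⁻¹ := by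
        have hinv : (t^2)⁻¹ ≤ (T^2)⁻¹ := by
          apply inv_anti₀ (by positivity)
          exact pow_le_pow_left₀ hTpos.le ht 2
        have hrr : (0:ℝ) ≤ (r^2-3*r)/9 := by nlinarith
        calc (r^2-3*r)/(9*t^2) = (r^2-3*r)/9 * (t^2)⁻¹ := by
              field_simp
          _ ≤ (r^2-3*r)/9 * (T^2)⁻¹ := mul_le_mul_of_nonneg_left hinv hrr
      have hq1 : (r^2-3*r)/(9*t^2) * ⟪x t - xstar, x t - xstar⟫
          ≤ (r^2-3*r)/9 * (T^2)⁻¹ * ⟪x t - xstar, x t - xstar⟫ :=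
        mul_le_mul_of_nonneg_right hq0 hVnn
      have hq2 : (r^2-3*r)/9 * (T^2)⁻¹ * ⟪x t - xstar, x t - xstar⟫
          ≤ (r^2-3*r)/9 * (T^2)⁻¹ * (2*r/(3*μ) * (C0 * t ^ (-(2*r/3):ℝ))) := by
        apply mul_le_mul_of_nonneg_left hV
        apply mul_nonneg (by nlinarith) (by positivity)
      have hRpos : (0:ℝ) < t ^ (-(2*r/3):ℝ) := Real.rpow_pos_of_pos htpos _
      nlinarith [hq1, hq2, hRpos]
    have hnorm : ‖x t - xstar‖^2 = ⟪x t - xstar, x t - xstar⟫ :=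
      (real_inner_self_eq_norm_sq _).symm
    rw [hnorm]
    exact hgoal2
end

section
/- There exists a constant C > 0 such that for all t ≥ T := √(2r²/(9μ)), f(x(t)) − f_* ≤ C · t^{−2r/3}; that is, the trajectory of the ODE ẍ + (r/t)ẋ + ∇f(x) = 0 satisfies f(x(t)) − f_* = O(t^{−2r/3}). -/
open scoped RealInnerProductSpace

lemma amgm_aux (β c q nv nu : ℝ) (hc : 0 ≤ c) (h1 : q ≤ nv * nu) (h2 : -(nv * nu) ≤ q) :
    0 ≤ β ^ 2 * nv ^ 2 + 2 * c * β * q + c ^ 2 * nu ^ 2 := by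
  rcases le_total 0 β with hβ | hβ
  · nlinarith [sq_nonneg (β * nv - c * nu), mul_le_mul_of_nonneg_left h2
      (by positivity : (0:ℝ) ≤ 2 * c * β)]
  · nlinarith [sq_nonneg (β * nv + c * nu),
      mul_le_mul_of_nonneg_left h1 (by nlinarith : (0:ℝ) ≤ 2 * c * (-β))]

lemma scalar_key (μ r t P g s2 s3 s4 nu nv q : ℝ)
    (hμ : 0 < μ) (hr : 0 < r) (ht : 0 < t) (hP : 0 ≤ P)
    (hg : P + μ / 2 * nu ^ 2 ≤ g)
    (hq1 : q ≤ nv * nu) (hq2 : -(nv * nu) ≤ q)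
    (hV : nv ^ 2 = (2*r/3) ^ 2 * nu ^ 2 + 2 * (2*r/3) * t * s2 + t ^ 2 * s3)
    (hq : q = (2*r/3) * nu ^ 2 + t * s2) :
    (2*r/3 - 2) / t * (t ^ 2 * P + 1/2 * nv ^ 2)
      + (2 * t * P + t ^ 2 * s4
        + ((2*r/3 + 1 - r) * ((2*r/3) * s2 + t * s3) - t * ((2*r/3) * g + t * s4)))
      ≤ ((2*r/3) * (2*r/3 + 1 - r) ^ 2 / μ) / t ^ 3 * (t ^ 2 * P + 1/2 * nv ^ 2) := by
  have h3 : (0:ℝ) < μ * t ^ 3 := by positivity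
  rw [← mul_le_mul_iff_right₀ h3]
  have H1 : 0 ≤ (2*r/3) * μ * t ^ 4 * (g - P - μ / 2 * nu ^ 2) := by
    have : 0 ≤ g - P - μ / 2 * nu ^ 2 := by linarith
    positivity
  have H2 : 0 ≤ (2*r/3) * ((2*r/3 + 1 - r) ^ 2 * nv ^ 2
      + 2 * (μ * t ^ 2) * (2*r/3 + 1 - r) * q + (μ * t ^ 2) ^ 2 * nu ^ 2) := by
    have := amgm_aux (2*r/3 + 1 - r) (μ * t ^ 2) q nv nu (by positivity) hq1 hq2
    positivity
  have H3 : 0 ≤ (2*r/3) * (2*r/3 + 1 - r) ^ 2 * t ^ 2 * P := by positivity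
  have e2 : μ * t ^ 3 * (((2*r/3) * (2*r/3 + 1 - r) ^ 2 / μ) / t ^ 3
      * (t ^ 2 * P + 1/2 * nv ^ 2))
      = (2*r/3) * (2*r/3 + 1 - r) ^ 2 * (t ^ 2 * P + 1/2 * nv ^ 2) := by
    field_simp
  have e1 : ∀ X Y : ℝ, μ * t ^ 3 * ((2*r/3 - 2) / t * X + Y)
      = μ * (2*r/3 - 2) * t ^ 2 * X + μ * t ^ 3 * Y := by
    intro X Y; field_simp
  rw [e2, e1]
  rw [hV] at *
  rw [hq] at *
  nlinarith [H1, H2, H3]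

/-- Theorem 6: along the trajectory of `ẍ + (r/t)ẋ + ∇f(x) = 0` with `f`
`μ`-strongly convex, `f(x t) - f_* = O(t^(-2r/3))` for `t ≥ T := √(2r²/(9μ))`. -/
theorem stmt_9
{n : ℕ} (μ r : ℝ) (hμ : 0 < μ) (hr : 0 < r)
    (f : EuclideanSpace ℝ (Fin n) → ℝ)
    (f' : EuclideanSpace ℝ (Fin n) → EuclideanSpace ℝ (Fin n))
    (hf' : ∀ p, HasGradientAt f (f' p) p)
    (hsc : ∀ p q, f q ≥ f p + ⟪f' p, q - p⟫ + μ / 2 * ‖q - p‖ ^ 2)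
    (xstar : EuclideanSpace ℝ (Fin n)) (hmin : ∀ p, f xstar ≤ f p)
    (x x' x'' : ℝ → EuclideanSpace ℝ (Fin n))
    (hx : ∀ t > (0:ℝ), HasDerivAt x (x' t) t)
    (hx' : ∀ t > (0:ℝ), HasDerivAt x' (x'' t) t)
    (hode : ∀ t > (0:ℝ), x'' t + (r / t) • x' t + f' (x t) = 0)
    (hx0 : ContinuousWithinAt x (Set.Ici 0) 0) :
    ∃ C > (0:ℝ), ∀ t, Real.sqrt (2 * r ^ 2 / (9 * μ)) ≤ t →
      f (x t) - f xstar ≤ C * t ^ (-(2 * r / 3)) := by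
  set a : ℝ := 2 * r / 3 with ha
  set β : ℝ := a + 1 - r with hβdef
  set K : ℝ := a * β ^ 2 / μ with hKdef
  have ha0 : 0 < a := by rw [ha]; positivity
  have hK0 : 0 ≤ K := by rw [hKdef]; positivity
  set T : ℝ := Real.sqrt (2 * r ^ 2 / (9 * μ)) with hTdef
  have hT0 : 0 < T := Real.sqrt_pos.mpr (by positivity)
  set v : ℝ → EuclideanSpace ℝ (Fin n) := fun t => a • (x t - xstar) + t • x' t with hvdef
  set w : ℝ → EuclideanSpace ℝ (Fin n) := fun t => β • x' t - t • f' (x t) with hwdef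
  set φ : ℝ → ℝ := fun t => t ^ 2 * (f (x t) - f xstar) + 1/2 * ⟪v t, v t⟫ with hφdef
  set φ' : ℝ → ℝ := fun t => 2 * t * (f (x t) - f xstar) + t ^ 2 * ⟪f' (x t), x' t⟫
      + ⟪v t, w t⟫ with hφ'def
  -- derivative of f ∘ x
  have hfx : ∀ t > (0:ℝ), HasDerivAt (fun s => f (x s)) ⟪f' (x t), x' t⟫ t := by
    intro t ht
    have h := (hf' (x t)).hasFDerivAt.comp_hasDerivAt t (hx t ht)
    simp only [InnerProductSpace.toDual_apply_apply] at h
    exact h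
  -- derivative of v
  have hv : ∀ t > (0:ℝ), HasDerivAt v (w t) t := by
    intro t ht
    have h1 : HasDerivAt (fun s => a • (x s - xstar)) (a • x' t) t :=
      ((hx t ht).sub_const xstar).const_smul a
    have h2 : HasDerivAt (fun s : ℝ => s • x' s) (t • x'' t + (1:ℝ) • x' t) t :=
      (hasDerivAt_id t).smul (hx' t ht)
    have h := h1.add h2
    have hgrad : f' (x t) = -(x'' t + (r / t) • x' t) := by
      rw [eq_neg_iff_add_eq_zero, add_comm]
      exact hode t ht
    have htr : t • ((r / t) • x' t) = r • x' t := by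
      rw [smul_smul, mul_div_cancel₀ r (ne_of_gt ht)]
    have heq : a • x' t + (t • x'' t + (1:ℝ) • x' t) = w t := by
      simp only [hwdef, hβdef, hgrad, smul_neg, smul_add, htr]
      module
    rw [← heq]; exact h
  -- derivative of φ
  have hφ : ∀ t > (0:ℝ), HasDerivAt φ (φ' t) t := by
    intro t ht
    have h1 : HasDerivAt (fun s : ℝ => s ^ 2 * (f (x s) - f xstar))
        ((2 * t ^ 1) * (f (x t) - f xstar) + t ^ 2 * ⟪f' (x t), x' t⟫) t := by
      exact (hasDerivAt_pow 2 t).mul ((hfx t ht).sub_const (f xstar))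
    have h2 : HasDerivAt (fun s => ⟪v s, v s⟫) (⟪v t, w t⟫ + ⟪w t, v t⟫) t :=
      (hv t ht).inner ℝ (hv t ht)
    have h := h1.add (h2.const_mul (1/2 : ℝ))
    have : (2 * t ^ 1) * (f (x t) - f xstar) + t ^ 2 * ⟪f' (x t), x' t⟫
        + 1/2 * (⟪v t, w t⟫ + ⟪w t, v t⟫) = φ' t := by
      have hcomm : ⟪w t, v t⟫ = ⟪v t, w t⟫ := real_inner_comm _ _
      simp only [hφ'def, hcomm]
      ring
    rw [← this]; exact h
  -- the energy
  set E : ℝ → ℝ := fun t => t ^ (a - 2) * φ t with hEdef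
  set E' : ℝ → ℝ := fun t => t ^ (a - 2) * ((a - 2) / t * φ t + φ' t) with hE'def
  have hE : ∀ t > (0:ℝ), HasDerivAt E (E' t) t := by
    intro t ht
    have h1 : HasDerivAt (fun s : ℝ => s ^ (a - 2)) ((a - 2) * t ^ (a - 2 - 1)) t :=
      Real.hasDerivAt_rpow_const (Or.inl (ne_of_gt ht))
    have h := h1.mul (hφ t ht)
    have : (a - 2) * t ^ (a - 2 - 1) * φ t + t ^ (a - 2) * φ' t = E' t := by
      rw [hE'def]
      have : t ^ (a - 2 - 1) = t ^ (a - 2) / t := by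
        rw [Real.rpow_sub ht, Real.rpow_one]
      rw [this]; field_simp
    rw [← this]; exact h
  have hrpow_pos : ∀ t : ℝ, 0 < t → 0 < t ^ (a - 2) := fun t ht => Real.rpow_pos_of_pos ht _
  have hP : ∀ t : ℝ, 0 ≤ f (x t) - f xstar := fun t => sub_nonneg.mpr (hmin (x t))
  have hφpos : ∀ t : ℝ, 0 ≤ φ t := by
    intro t
    have h1 : 0 ≤ t ^ 2 * (f (x t) - f xstar) := mul_nonneg (sq_nonneg t) (hP t)
    have h2 : (0:ℝ) ≤ ⟪v t, v t⟫ := real_inner_self_nonneg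
    simp only [hφdef]
    linarith
  have hEpos : ∀ t : ℝ, 0 < t → 0 ≤ E t := by
    intro t ht
    exact mul_nonneg (hrpow_pos t ht).le (hφpos t)
  -- key derivative inequality
  have hkey : ∀ t > (0:ℝ), E' t ≤ K / t ^ 3 * E t := by
    intro t ht
    rw [hE'def, hEdef]
    rw [show K / t ^ 3 * (t ^ (a - 2) * φ t) = t ^ (a - 2) * (K / t ^ 3 * φ t) by ring]
    apply mul_le_mul_of_nonneg_left _ (hrpow_pos t ht).le
    -- scalar inequality
    have hVexp : ⟪v t, v t⟫ = a ^ 2 * ⟪x t - xstar, x t - xstar⟫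
        + 2 * a * t * ⟪x t - xstar, x' t⟫ + t ^ 2 * ⟪x' t, x' t⟫ := by
      simp only [hvdef, inner_add_left, inner_add_right, inner_smul_left, inner_smul_right,
        RCLike.ofReal_real_eq_id, id, conj_trivial]
      rw [real_inner_comm (x' t) (x t - xstar)]; ring
    have hVWexp : ⟪v t, w t⟫ = β * (a * ⟪x t - xstar, x' t⟫ + t * ⟪x' t, x' t⟫)
        - t * (a * ⟪x t - xstar, f' (x t)⟫ + t * ⟪x' t, f' (x t)⟫) := by
      simp only [hvdef, hwdef, inner_add_left, inner_sub_right, inner_smul_left,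
        inner_smul_right, RCLike.ofReal_real_eq_id, id, conj_trivial]
      try ring
    have hqexp : ⟪v t, x t - xstar⟫ = a * ⟪x t - xstar, x t - xstar⟫ + t * ⟪x t - xstar, x' t⟫ := by
      simp only [hvdef, inner_add_left, inner_smul_left, RCLike.ofReal_real_eq_id, id,
        conj_trivial]
      try rw [real_inner_comm (x' t) (x t - xstar)]
      try ring
    have hnu : ⟪x t - xstar, x t - xstar⟫ = ‖x t - xstar‖ ^ 2 := real_inner_self_eq_norm_sq _
    have hnv : ⟪v t, v t⟫ = ‖v t‖ ^ 2 := real_inner_self_eq_norm_sq _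
    have hsc' : (f (x t) - f xstar) + μ / 2 * ‖x t - xstar‖ ^ 2 ≤ ⟪x t - xstar, f' (x t)⟫ := by
      have h := hsc (x t) xstar
      have h1 : ⟪f' (x t), xstar - x t⟫ = - ⟪x t - xstar, f' (x t)⟫ := by
        rw [real_inner_comm]
        rw [show xstar - x t = -(x t - xstar) by abel, inner_neg_left]
      rw [h1] at h
      have h2 : ‖xstar - x t‖ = ‖x t - xstar‖ := norm_sub_rev _ _
      rw [h2] at h
      linarith
    have hcs1 : ⟪v t, x t - xstar⟫ ≤ ‖v t‖ * ‖x t - xstar‖ := real_inner_le_norm _ _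
    have hcs2 : -(‖v t‖ * ‖x t - xstar‖) ≤ ⟪v t, x t - xstar⟫ :=
      (abs_le.mp (abs_real_inner_le_norm (v t) (x t - xstar))).1
    have hVkey : ‖v t‖ ^ 2 = (2*r/3) ^ 2 * ‖x t - xstar‖ ^ 2
        + 2 * (2*r/3) * t * ⟪x t - xstar, x' t⟫ + t ^ 2 * ⟪x' t, x' t⟫ := by
      rw [← hnv, hVexp, hnu, ha]
    have hqkey : ⟪v t, x t - xstar⟫ = (2*r/3) * ‖x t - xstar‖ ^ 2 + t * ⟪x t - xstar, x' t⟫ := by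
      rw [hqexp, hnu, ha]
    have key := scalar_key μ r t (f (x t) - f xstar) ⟪x t - xstar, f' (x t)⟫
      ⟪x t - xstar, x' t⟫ ⟪x' t, x' t⟫ ⟪f' (x t), x' t⟫ ‖x t - xstar‖ ‖v t‖
      ⟪v t, x t - xstar⟫ hμ hr ht (hP t) hsc' hcs1 hcs2 hVkey hqkey
    have hs4 : ⟪x' t, f' (x t)⟫ = ⟪f' (x t), x' t⟫ := real_inner_comm _ _
    simp only [hφdef, hφ'def, hVWexp, hs4, hnv]
    rw [hKdef, hβdef, ha]
    exact key
  -- Grönwall via the auxiliary function F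
  set F : ℝ → ℝ := fun t => E t * Real.exp (K / (2 * t ^ 2)) with hFdef
  have hFd : ∀ t > (0:ℝ), HasDerivAt F
      ((E' t - K / t ^ 3 * E t) * Real.exp (K / (2 * t ^ 2))) t := by
    intro t ht
    have h1 : HasDerivAt (fun s : ℝ => 2 * s ^ 2) (2 * (2 * t ^ 1)) t :=
      (hasDerivAt_pow 2 t).const_mul 2
    have h2 := (h1.inv (by positivity : 2 * t ^ 2 ≠ 0)).const_mul K
    have h3 : HasDerivAt (fun s : ℝ => K / (2 * s ^ 2)) (-(K / t ^ 3)) t := by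
      have ht' : t ≠ 0 := ne_of_gt ht
      have e : -(K / t ^ 3) = K * (-(2 * (2 * t ^ 1)) / (2 * t ^ 2) ^ 2) := by
        field_simp
      rw [e]; exact h2
    have h4 := (hE t ht).mul h3.exp
    have e3 : E' t * Real.exp (K / (2 * t ^ 2))
        + E t * (Real.exp (K / (2 * t ^ 2)) * -(K / t ^ 3))
        = (E' t - K / t ^ 3 * E t) * Real.exp (K / (2 * t ^ 2)) := by ring
    rw [e3] at h4; exact h4
  have hanti : AntitoneOn F (Set.Ici T) := by
    apply antitoneOn_of_deriv_nonpos (convex_Ici T)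
    · intro s hs
      exact (hFd s (lt_of_lt_of_le hT0 hs)).continuousAt.continuousWithinAt
    · rw [interior_Ici]
      intro s hs
      exact (hFd s (hT0.trans hs)).differentiableAt.differentiableWithinAt
    · rw [interior_Ici]
      intro s hs
      have hs0 : 0 < s := hT0.trans hs
      rw [(hFd s hs0).deriv]
      have h := hkey s hs0
      have hle : E' s - K / s ^ 3 * E s ≤ 0 := by linarith
      exact mul_nonpos_of_nonpos_of_nonneg hle (Real.exp_pos _).le
  have hFT : 0 ≤ F T := mul_nonneg (hEpos T hT0) (Real.exp_pos _).le
  refine ⟨F T + 1, by linarith, ?_⟩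
  intro t htT
  have ht0 : 0 < t := lt_of_lt_of_le hT0 htT
  have h1 : E t ≤ F t := by
    have hexp1 : (1:ℝ) ≤ Real.exp (K / (2 * t ^ 2)) := Real.one_le_exp (by positivity)
    calc E t = E t * 1 := (mul_one _).symm
      _ ≤ E t * Real.exp (K / (2 * t ^ 2)) :=
          mul_le_mul_of_nonneg_left hexp1 (hEpos t ht0)
      _ = F t := rfl
  have h2 : F t ≤ F T := hanti Set.self_mem_Ici htT htT
  have h3 : t ^ a * (f (x t) - f xstar) ≤ E t := by
    have hvv : (0:ℝ) ≤ ⟪v t, v t⟫ := real_inner_self_nonneg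
    have e : t ^ (a - 2) * t ^ (2:ℕ) = t ^ a := by
      rw [← Real.rpow_natCast t 2, ← Real.rpow_add ht0]
      norm_num
    have e2 : t ^ (a - 2) * t ^ (2:ℕ) * (f (x t) - f xstar)
        = t ^ a * (f (x t) - f xstar) := by rw [e]
    have h5 : 0 ≤ t ^ (a - 2) * ⟪v t, v t⟫ := mul_nonneg (hrpow_pos t ht0).le hvv
    simp only [hEdef, hφdef]
    nlinarith [e2, h5]
  have h6 : t ^ a * (f (x t) - f xstar) ≤ F T + 1 := by linarith
  have htpow : 0 < t ^ a := Real.rpow_pos_of_pos ht0 a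
  rw [Real.rpow_neg ht0.le, ← div_eq_mul_inv]
  rw [le_div_iff₀ htpow]
  calc (f (x t) - f xstar) * t ^ a = t ^ a * (f (x t) - f xstar) := by ring
    _ ≤ F T + 1 := h6
end

section
/- For all t ≥ T := (2r²/(9μ))^{1/(2α)}, the derivative of E satisfies E'(t) ≤ − exp((2/3)·(r/(1−α))·t^{1−α}) · (rα(1+α)·t^{−2}/(3·t^{α})) · ‖x(t) − x_*‖² ≤ 0; in particular E is non-increasing on [T, ∞). -/
set_option maxHeartbeats 2000000


open scoped RealInnerProductSpace

/-- Lemma 7 (descent of the Lyapunov function for `ẍ + (r/t^α)ẋ + ∇f(x) = 0`):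
for `t ≥ T := (2r²/(9μ))^(1/(2α))`,
`E'(t) ≤ -exp((2/3)(r/(1-α)) t^(1-α)) * (rα(1+α) t^(-2)/(3 t^α)) ‖x t - x_*‖² ≤ 0`;
in particular `E` is non-increasing on `[T, ∞)`. -/
theorem stmt_11
{n : ℕ} (μ r α : ℝ) (hμ : 0 < μ) (hr : 0 < r) (hα0 : 0 < α) (hα1 : α < 1)
    (f : EuclideanSpace ℝ (Fin n) → ℝ)
    (f' : EuclideanSpace ℝ (Fin n) → EuclideanSpace ℝ (Fin n))
    (hf' : ∀ p, HasGradientAt f (f' p) p)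
    (hsc : ∀ p q, f q ≥ f p + ⟪f' p, q - p⟫ + μ / 2 * ‖q - p‖ ^ 2)
    (xstar : EuclideanSpace ℝ (Fin n)) (hmin : ∀ p, f xstar ≤ f p)
    (x x' x'' : ℝ → EuclideanSpace ℝ (Fin n))
    (hx : ∀ t > (0:ℝ), HasDerivAt x (x' t) t)
    (hx' : ∀ t > (0:ℝ), HasDerivAt x' (x'' t) t)
    (hode : ∀ t > (0:ℝ), x'' t + (r / t ^ α) • x' t + f' (x t) = 0)
(E : ℝ → ℝ)
    (hE : ∀ t, E t
        = Real.exp (2 / 3 * (r / (1 - α)) * t ^ (1 - α))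
            * (f (x t) - f xstar
                - (r ^ 2 * t ^ (-α) - 3 * r * α * t⁻¹) / (9 * t ^ α) * ‖x t - xstar‖ ^ 2)
          + 1 / 2 * Real.exp (2 / 3 * (r / (1 - α)) * t ^ (1 - α))
            * ‖x' t + (2 / 3 * r * t ^ (-α)) • (x t - xstar)‖ ^ 2) :
    (∀ t, (2 * r ^ 2 / (9 * μ)) ^ (1 / (2 * α)) ≤ t →
      deriv E t ≤ -Real.exp (2 / 3 * (r / (1 - α)) * t ^ (1 - α))
          * (r * α * (1 + α) * t ^ (-2 : ℝ) / (3 * t ^ α)) * ‖x t - xstar‖ ^ 2 ∧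
      -Real.exp (2 / 3 * (r / (1 - α)) * t ^ (1 - α))
          * (r * α * (1 + α) * t ^ (-2 : ℝ) / (3 * t ^ α)) * ‖x t - xstar‖ ^ 2 ≤ 0) ∧
    AntitoneOn E (Set.Ici ((2 * r ^ 2 / (9 * μ)) ^ (1 / (2 * α)))) := by
  have h1α : (0:ℝ) < 1 - α := by linarith
  have hT0 : (0:ℝ) < (2 * r ^ 2 / (9 * μ)) ^ (1 / (2 * α)) :=
    Real.rpow_pos_of_pos (by positivity) _
  have hEfun : E = fun τ : ℝ =>
      Real.exp (2 / 3 * (r / (1 - α)) * τ ^ (1 - α))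
        * (f (x τ) - f xstar
            - (r ^ 2 * τ ^ (-α) - 3 * r * α * τ⁻¹) / (9 * τ ^ α) * ‖x τ - xstar‖ ^ 2)
        + 1 / 2 * Real.exp (2 / 3 * (r / (1 - α)) * τ ^ (1 - α))
          * ‖x' τ + (2 / 3 * r * τ ^ (-α)) • (x τ - xstar)‖ ^ 2 := funext hE
  have hkey : ∀ t : ℝ, 0 < t → ∃ d : ℝ, HasDerivAt E d t ∧
      ((2 * r ^ 2 / (9 * μ)) ^ (1 / (2 * α)) ≤ t →
        d ≤ -Real.exp (2 / 3 * (r / (1 - α)) * t ^ (1 - α))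
            * (r * α * (1 + α) * t ^ (-2 : ℝ) / (3 * t ^ α)) * ‖x t - xstar‖ ^ 2) := by
    intro t ht
    have htne : t ≠ 0 := ht.ne'
    have hP0 : (0:ℝ) < t ^ (-α) := Real.rpow_pos_of_pos ht _
    have hQ0 : (0:ℝ) < t ^ α := Real.rpow_pos_of_pos ht _
    have hPne : t ^ (-α) ≠ 0 := hP0.ne'
    have hpq1 : t ^ α * t ^ (-α) = 1 := by
      rw [← Real.rpow_add ht]; simp
    have hqP : t ^ α = (t ^ (-α))⁻¹ := by
      rw [Real.rpow_neg ht.le α, inv_inv]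
    have hpm1 : t ^ (-α - 1) = t ^ (-α) * t⁻¹ := by
      rw [show -α - 1 = -α + (-1) by ring, Real.rpow_add ht, Real.rpow_neg_one]
    have hqm1 : t ^ (α - 1) = t ^ α * t⁻¹ := by
      rw [show α - 1 = α + (-1) by ring, Real.rpow_add ht, Real.rpow_neg_one]
    -- derivative of the exponential factor
    have hc : HasDerivAt (fun τ : ℝ => Real.exp (2 / 3 * (r / (1 - α)) * τ ^ (1 - α)))
        (2 / 3 * r * t ^ (-α) * Real.exp (2 / 3 * (r / (1 - α)) * t ^ (1 - α))) t := by
      have h := ((Real.hasDerivAt_rpow_const (x := t) (p := 1 - α)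
        (Or.inl htne)).const_mul (2 / 3 * (r / (1 - α)))).exp
      convert h using 1
      rw [show (1 : ℝ) - α - 1 = -α by ring]
      field_simp
    have hX : HasDerivAt (fun τ => f (x τ)) ⟪f' (x t), x' t⟫ t := by
      have h := ((hf' (x t)).hasFDerivAt).comp_hasDerivAt t (hx t ht)
      simp at h
      exact h
    have hu : HasDerivAt (fun τ => x τ - xstar) (x' t) t := (hx t ht).sub_const _
    have hN : HasDerivAt (fun τ => ‖x τ - xstar‖ ^ 2) (2 * ⟪x t - xstar, x' t⟫) t := by
      have h := hu.inner ℝ hu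
      have hfun : (fun τ => ‖x τ - xstar‖ ^ 2) = fun τ => ⟪x τ - xstar, x τ - xstar⟫ := by
        funext τ; exact (real_inner_self_eq_norm_sq _).symm
      rw [hfun]; refine h.congr_deriv ?_
      rw [real_inner_comm]; ring
    have hpow2 : HasDerivAt (fun τ : ℝ => τ ^ (-α)) (-α * t ^ (-α - 1)) t :=
      Real.hasDerivAt_rpow_const (Or.inl htne)
    have ha : HasDerivAt (fun τ : ℝ => 2 / 3 * r * τ ^ (-α))
        (2 / 3 * r * (-α * t ^ (-α - 1))) t := hpow2.const_mul _
    have hv : HasDerivAt (fun τ => x' τ + (2 / 3 * r * τ ^ (-α)) • (x τ - xstar))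
        (x'' t + ((2 / 3 * r * t ^ (-α)) • x' t
          + (2 / 3 * r * (-α * t ^ (-α - 1))) • (x t - xstar))) t :=
      (hx' t ht).add (ha.smul hu)
    have hVfun : (fun τ => ‖x' τ + (2 / 3 * r * τ ^ (-α)) • (x τ - xstar)‖ ^ 2)
        = fun τ => ⟪x' τ + (2 / 3 * r * τ ^ (-α)) • (x τ - xstar),
            x' τ + (2 / 3 * r * τ ^ (-α)) • (x τ - xstar)⟫ := by
      funext τ; exact (real_inner_self_eq_norm_sq _).symm
    have hV : HasDerivAt (fun τ => ‖x' τ + (2 / 3 * r * τ ^ (-α)) • (x τ - xstar)‖ ^ 2)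
        (⟪x' t + (2 / 3 * r * t ^ (-α)) • (x t - xstar),
            x'' t + ((2 / 3 * r * t ^ (-α)) • x' t
              + (2 / 3 * r * (-α * t ^ (-α - 1))) • (x t - xstar))⟫
          + ⟪x'' t + ((2 / 3 * r * t ^ (-α)) • x' t
              + (2 / 3 * r * (-α * t ^ (-α - 1))) • (x t - xstar)),
            x' t + (2 / 3 * r * t ^ (-α)) • (x t - xstar)⟫) t := by
      rw [hVfun]; exact hv.inner ℝ hv
    have hnum : HasDerivAt (fun τ : ℝ => r ^ 2 * τ ^ (-α) - 3 * r * α * τ⁻¹)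
        (r ^ 2 * (-α * t ^ (-α - 1)) - 3 * r * α * (-(t ^ 2)⁻¹)) t :=
      (hpow2.const_mul _).sub ((hasDerivAt_inv htne).const_mul _)
    have hden : HasDerivAt (fun τ : ℝ => 9 * τ ^ α) (9 * (α * t ^ (α - 1))) t :=
      (Real.hasDerivAt_rpow_const (Or.inl htne)).const_mul _
    have hb := hnum.div hden (mul_pos (by norm_num : (0:ℝ) < 9) hQ0).ne'
    have hFpart := (hX.sub_const (f xstar)).sub (hb.mul hN)
    have hder0 := (hc.mul hFpart).add ((hc.const_mul (1/2)).mul hV)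
    refine ⟨_, (by rw [hEfun]; exact hder0), ?_⟩
    intro hTt
    -- strong convexity bound
    have hFG : f (x t) - f xstar ≤ ⟪f' (x t), x t - xstar⟫ - μ / 2 * ‖x t - xstar‖ ^ 2 := by
      have h := hsc (x t) xstar
      rw [show xstar - x t = -(x t - xstar) by abel] at h
      rw [inner_neg_right, norm_neg] at h
      linarith
    -- consequence of t ≥ T
    have hp2 : 2 * r ^ 2 * (t ^ (-α)) ^ 2 ≤ 9 * μ := by
      have h2α : (0:ℝ) < 2 * α := by linarith
      have hbase : (0:ℝ) < 2 * r ^ 2 / (9 * μ) := by positivity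
      have h1 : (2 * r ^ 2 / (9 * μ)) ^ ((1 / (2 * α)) * (2 * α)) ≤ t ^ (2 * α) := by
        rw [Real.rpow_mul hbase.le]
        exact Real.rpow_le_rpow (Real.rpow_nonneg hbase.le _) hTt h2α.le
      rw [one_div_mul_cancel h2α.ne', Real.rpow_one] at h1
      have hq2 : t ^ (2 * α) = (t ^ α) ^ 2 := by
        rw [mul_comm, Real.rpow_mul ht.le, show ((2:ℝ)) = ((2:ℕ):ℝ) by norm_num,
          Real.rpow_natCast]
      rw [hq2] at h1
      have h2 := (div_le_iff₀ (by positivity : (0:ℝ) < 9 * μ)).mp h1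
      have h3 := mul_le_mul_of_nonneg_right h2 (sq_nonneg (t ^ (-α)))
      have h4 : (t ^ α) ^ 2 * (t ^ (-α)) ^ 2 = 1 := by
        rw [← mul_pow, hpq1, one_pow]
      nlinarith [h3, h4, hμ]
    have hVexp : ‖x' t + (2 / 3 * r * t ^ (-α)) • (x t - xstar)‖ ^ 2
        = ‖x' t‖ ^ 2 + 2 * (2 / 3 * r * t ^ (-α)) * ⟪x t - xstar, x' t⟫
          + (2 / 3 * r * t ^ (-α)) ^ 2 * ‖x t - xstar‖ ^ 2 := by
      rw [norm_add_sq_real, norm_smul, real_inner_smul_right,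
        real_inner_comm (x' t) (x t - xstar)]
      simp only [Real.norm_eq_abs, mul_pow, sq_abs]
      ring
    have hxdd : x'' t = -((r / t ^ α) • x' t) - f' (x t) := by
      have h := hode t ht
      have h2 : x'' t + ((r / t ^ α) • x' t + f' (x t)) = 0 := by rw [← add_assoc]; exact h
      rw [add_eq_zero_iff_eq_neg] at h2
      rw [h2]; abel
    refine le_trans (le_of_eq (?_ : _ = Real.exp (2 / 3 * (r / (1 - α)) * t ^ (1 - α))
        * (2 / 3 * r * t ^ (-α) * (f (x t) - f xstar - ⟪f' (x t), x t - xstar⟫)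
          + (2 / 27 * r ^ 3 * (t ^ (-α)) ^ 3
             - r * α * (1 + α) / 3 * (t ^ (-α) * (t⁻¹ * t⁻¹))) * ‖x t - xstar‖ ^ 2))) ?_
    · simp only [Pi.sub_apply, Pi.mul_apply, Pi.div_apply]
      rw [hxdd, hVexp]
      generalize f (x t) = F0
      generalize hG : f' (x t) = g
      generalize hU : x t - xstar = u
      generalize hS : x' t = s
      simp only [inner_add_left, inner_add_right, inner_sub_left, inner_sub_right,
        inner_neg_left, inner_neg_right, real_inner_smul_left, real_inner_smul_right,
        real_inner_self_eq_norm_sq]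
      simp only [real_inner_comm s u, real_inner_comm s g, real_inner_comm u g]
      rw [hpm1, hqm1, hqP]
      field_simp
      ring
    · rw [show -Real.exp (2 / 3 * (r / (1 - α)) * t ^ (1 - α))
            * (r * α * (1 + α) * t ^ (-2:ℝ) / (3 * t ^ α)) * ‖x t - xstar‖ ^ 2
          = -(Real.exp (2 / 3 * (r / (1 - α)) * t ^ (1 - α))
            * (r * α * (1 + α) * (t ^ (-α) * (t⁻¹ * t⁻¹)) / 3) * ‖x t - xstar‖ ^ 2) by
        rw [show (-2:ℝ) = -1 + -1 by norm_num, Real.rpow_add ht, Real.rpow_neg_one, hqP]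
        field_simp]
      have hcP : (0:ℝ) < Real.exp (2 / 3 * (r / (1 - α)) * t ^ (1 - α))
          * (2 / 3 * r * t ^ (-α)) :=
        mul_pos (Real.exp_pos _) (mul_pos (mul_pos (by norm_num) hr) hP0)
      have h1 := mul_le_mul_of_nonneg_left hFG hcP.le
      have hnn : (0:ℝ) ≤ Real.exp (2 / 3 * (r / (1 - α)) * t ^ (1 - α)) * r * t ^ (-α)
          * ‖x t - xstar‖ ^ 2 :=
        mul_nonneg (mul_nonneg (mul_nonneg (Real.exp_pos _).le hr.le) hP0.le) (sq_nonneg _)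
      have h2 := mul_le_mul_of_nonneg_right hp2 hnn
      nlinarith [h1, h2]
  have main : ∀ t, (2 * r ^ 2 / (9 * μ)) ^ (1 / (2 * α)) ≤ t →
      deriv E t ≤ -Real.exp (2 / 3 * (r / (1 - α)) * t ^ (1 - α))
          * (r * α * (1 + α) * t ^ (-2 : ℝ) / (3 * t ^ α)) * ‖x t - xstar‖ ^ 2 ∧
      -Real.exp (2 / 3 * (r / (1 - α)) * t ^ (1 - α))
          * (r * α * (1 + α) * t ^ (-2 : ℝ) / (3 * t ^ α)) * ‖x t - xstar‖ ^ 2 ≤ 0 := by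
    intro t htT
    have ht : 0 < t := lt_of_lt_of_le hT0 htT
    obtain ⟨d, hd, hle⟩ := hkey t ht
    have hd0 : (0:ℝ) ≤ Real.exp (2 / 3 * (r / (1 - α)) * t ^ (1 - α))
        * (r * α * (1 + α) * t ^ (-2 : ℝ) / (3 * t ^ α)) * ‖x t - xstar‖ ^ 2 := by
      refine mul_nonneg (mul_nonneg (Real.exp_pos _).le ?_) (sq_nonneg _)
      refine div_nonneg ?_ ?_
      · exact mul_nonneg (mul_nonneg (mul_nonneg hr.le hα0.le) (by linarith))
          (Real.rpow_nonneg ht.le _)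
      · exact mul_nonneg (by norm_num) (Real.rpow_nonneg ht.le _)
    constructor
    · rw [hd.deriv]; exact hle htT
    · linarith [hd0]
  refine ⟨main, ?_⟩
  apply antitoneOn_of_deriv_nonpos (convex_Ici _)
  · intro t htT
    have ht : 0 < t := lt_of_lt_of_le hT0 htT
    obtain ⟨d, hd, -⟩ := hkey t ht
    exact hd.differentiableAt.continuousAt.continuousWithinAt
  · intro t htT
    rw [interior_Ici] at htT
    have ht : 0 < t := lt_of_lt_of_le hT0 (le_of_lt htT)
    obtain ⟨d, hd, -⟩ := hkey t ht
    exact hd.differentiableAt.differentiableWithinAt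
  · intro t htT
    rw [interior_Ici] at htT
    have h := main t (le_of_lt htT)
    linarith [h.1, h.2]
end

section
/- For all t ≥ T := (2r²/(9μ))^{1/(2α)}, one has (1/2)·exp((2/3)·(r/(1−α))·t^{1−α})·‖ẋ(t) + (2/3)·r·t^{−α}·(x(t) − x_*)‖² ≤ E(T). -/
open scoped RealInnerProductSpace

set_option maxHeartbeats 2000000 in
/-- Inequality (31) in the proof of Lemma 9: for `t ≥ T := (2r²/(9μ))^(1/(2α))`,
`(1/2) exp((2/3)(r/(1-α)) t^(1-α)) ‖ẋ(t) + (2/3) r t^(-α) (x t - x_*)‖² ≤ E(T)`. -/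
theorem stmt_14
{n : ℕ} (μ r α : ℝ) (hμ : 0 < μ) (hr : 0 < r) (hα0 : 0 < α) (hα1 : α < 1)
    (f : EuclideanSpace ℝ (Fin n) → ℝ)
    (f' : EuclideanSpace ℝ (Fin n) → EuclideanSpace ℝ (Fin n))
    (hf' : ∀ p, HasGradientAt f (f' p) p)
    (hsc : ∀ p q, f q ≥ f p + ⟪f' p, q - p⟫ + μ / 2 * ‖q - p‖ ^ 2)
    (xstar : EuclideanSpace ℝ (Fin n)) (hmin : ∀ p, f xstar ≤ f p)
    (x x' x'' : ℝ → EuclideanSpace ℝ (Fin n))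
    (hx : ∀ t > (0:ℝ), HasDerivAt x (x' t) t)
    (hx' : ∀ t > (0:ℝ), HasDerivAt x' (x'' t) t)
    (hode : ∀ t > (0:ℝ), x'' t + (r / t ^ α) • x' t + f' (x t) = 0)
(E : ℝ → ℝ)
    (hE : ∀ t, E t
        = Real.exp (2 / 3 * (r / (1 - α)) * t ^ (1 - α))
            * (f (x t) - f xstar
                - (r ^ 2 * t ^ (-α) - 3 * r * α * t⁻¹) / (9 * t ^ α) * ‖x t - xstar‖ ^ 2)
          + 1 / 2 * Real.exp (2 / 3 * (r / (1 - α)) * t ^ (1 - α))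
            * ‖x' t + (2 / 3 * r * t ^ (-α)) • (x t - xstar)‖ ^ 2) :
    ∀ t, (2 * r ^ 2 / (9 * μ)) ^ (1 / (2 * α)) ≤ t →
      1 / 2 * Real.exp (2 / 3 * (r / (1 - α)) * t ^ (1 - α))
          * ‖x' t + (2 / 3 * r * t ^ (-α)) • (x t - xstar)‖ ^ 2
        ≤ E ((2 * r ^ 2 / (9 * μ)) ^ (1 / (2 * α))) := by
  intro t htT
  set T : ℝ := (2 * r ^ 2 / (9 * μ)) ^ (1 / (2 * α)) with hTdef
  have hbase : (0:ℝ) < 2 * r ^ 2 / (9 * μ) := by positivity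
  have hT : 0 < T := Real.rpow_pos_of_pos hbase _
  have h1α : (0:ℝ) < 1 - α := by linarith
  -- gradient vanishes at the minimizer
  have hz0 : f' xstar = 0 := by
    have hlm : IsLocalMin f xstar := Filter.Eventually.of_forall hmin
    have h2 := hlm.hasFDerivAt_eq_zero (hf' xstar).hasFDerivAt
    exact (LinearIsometryEquiv.map_eq_zero_iff _).mp h2
  have hgrow : ∀ p, μ / 2 * ‖p - xstar‖ ^ 2 ≤ f p - f xstar := by
    intro p
    have h := hsc xstar p
    rw [hz0, inner_zero_left] at h
    linarith
  have hsc2 : ∀ p, f p - f xstar - ⟪f' p, p - xstar⟫ ≤ -(μ / 2) * ‖p - xstar‖ ^ 2 := by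
    intro p
    have h := hsc p xstar
    rw [show xstar - p = -(p - xstar) from (neg_sub p xstar).symm, inner_neg_right,
      norm_neg] at h
    linarith
  -- powers at points ≥ T
  have hpow : ∀ s : ℝ, T ≤ s → 2 * r ^ 2 / (9 * μ) ≤ s ^ (2 * α) := by
    intro s hs
    have h1 : T ^ (2 * α) ≤ s ^ (2 * α) :=
      Real.rpow_le_rpow hT.le hs (by positivity)
    have h2 : T ^ (2 * α) = 2 * r ^ 2 / (9 * μ) := by
      rw [hTdef, ← Real.rpow_mul hbase.le, one_div,
        inv_mul_cancel₀ (by positivity : (2 * α : ℝ) ≠ 0), Real.rpow_one]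
    linarith
  set G : ℝ → ℝ := fun s => Real.exp (2 / 3 * (r / (1 - α)) * s ^ (1 - α))
      * (f (x s) - f xstar
          - (r ^ 2 / 9 * (s ^ (-α)) ^ 2 - r * α / 3 * (s ^ (-α) * s⁻¹))
            * ⟪x s - xstar, x s - xstar⟫)
    + 1 / 2 * Real.exp (2 / 3 * (r / (1 - α)) * s ^ (1 - α))
      * ⟪x' s + (2 / 3 * r * s ^ (-α)) • (x s - xstar),
          x' s + (2 / 3 * r * s ^ (-α)) • (x s - xstar)⟫ with hGdef
  set D : ℝ → ℝ := fun s => Real.exp (2 / 3 * (r / (1 - α)) * s ^ (1 - α))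
      * (2 / 3 * r * s ^ (-α)
            * (f (x s) - f xstar - ⟪f' (x s), x s - xstar⟫)
          + (2 / 27 * r ^ 3 * (s ^ (-α)) ^ 3
              - α * (α + 1) * r / 3 * (s ^ (-α) * (s⁻¹) ^ 2))
            * ⟪x s - xstar, x s - xstar⟫) with hDdef
  have hEG : ∀ s : ℝ, 0 < s → E s = G s := by
    intro s hs
    have hsane : s ^ α ≠ 0 := (Real.rpow_pos_of_pos hs α).ne'
    have hcoef : (r ^ 2 * s ^ (-α) - 3 * r * α * s⁻¹) / (9 * s ^ α)
        = r ^ 2 / 9 * (s ^ (-α)) ^ 2 - r * α / 3 * (s ^ (-α) * s⁻¹) := by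
      rw [Real.rpow_neg hs.le]
      field_simp
      ring
    rw [hE s, hGdef]
    simp only [real_inner_self_eq_norm_sq, hcoef]
  have hmain : ∀ s : ℝ, 0 < s → HasDerivAt G (D s) s := by
    intro t ht
    have hne : t ≠ 0 := ne_of_gt ht
    have hde : HasDerivAt (fun s : ℝ => s ^ (-α)) (-α * (t ^ (-α) * t⁻¹)) t := by
      have h := Real.hasDerivAt_rpow_const (x := t) (p := -α) (Or.inl hne)
      convert h using 1
      rw [show (-α - 1 : ℝ) = -α + (-1) by ring, Real.rpow_add ht, Real.rpow_neg_one]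
    have hdi : HasDerivAt (fun s : ℝ => s⁻¹) (-(t⁻¹ * t⁻¹)) t := by
      have h := hasDerivAt_inv hne
      rwa [sq, mul_inv] at h
    have hdp : HasDerivAt (fun s : ℝ => s ^ (1 - α)) ((1 - α) * t ^ (-α)) t := by
      have h := Real.hasDerivAt_rpow_const (x := t) (p := 1 - α) (Or.inl hne)
      simpa [show (1 - α - 1 : ℝ) = -α by ring] using h
    have hdA : HasDerivAt (fun s : ℝ => Real.exp (2 / 3 * (r / (1 - α)) * s ^ (1 - α)))
        (Real.exp (2 / 3 * (r / (1 - α)) * t ^ (1 - α)) * (2 / 3 * r * t ^ (-α))) t := by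
      have h := (hdp.const_mul (2 / 3 * (r / (1 - α)))).exp
      convert h using 1
      field_simp
    have hdu : HasDerivAt (fun s : ℝ => x s - xstar) (x' t) t := (hx t ht).sub_const _
    have hdc : HasDerivAt (fun s : ℝ => 2 / 3 * r * s ^ (-α))
        (2 / 3 * r * (-α * (t ^ (-α) * t⁻¹))) t := hde.const_mul _
    have hdV : HasDerivAt (fun s : ℝ => x' s + (2 / 3 * r * s ^ (-α)) • (x s - xstar))
        (x'' t + ((2 / 3 * r * t ^ (-α)) • x' t
          + (2 / 3 * r * (-α * (t ^ (-α) * t⁻¹))) • (x t - xstar))) t :=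
      (hx' t ht).add (hdc.smul hdu)
    have hdQ := hdu.inner ℝ hdu
    have hdVV := hdV.inner ℝ hdV
    have hdφ : HasDerivAt (fun s : ℝ => f (x s) - f xstar) ⟪f' (x t), x' t⟫ t := by
      have h := ((hf' (x t)).hasFDerivAt.comp_hasDerivAt t (hx t ht)).sub_const (f xstar)
      simpa [InnerProductSpace.toDual_apply_apply] using h
    have hdb : HasDerivAt
        (fun s : ℝ => r ^ 2 / 9 * (s ^ (-α)) ^ 2 - r * α / 3 * (s ^ (-α) * s⁻¹))
        (r ^ 2 / 9 * ((2 : ℕ) * (t ^ (-α)) ^ 1 * (-α * (t ^ (-α) * t⁻¹)))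
          - r * α / 3 * ((-α * (t ^ (-α) * t⁻¹)) * t⁻¹ + t ^ (-α) * (-(t⁻¹ * t⁻¹)))) t :=
      ((hde.pow 2).const_mul (r ^ 2 / 9)).sub ((hde.mul hdi).const_mul (r * α / 3))
    have hG0 := (hdA.mul (hdφ.sub (hdb.mul hdQ))).add ((hdA.const_mul (1 / 2)).mul hdVV)
    have hdiv : r / t ^ α = r * t ^ (-α) := by
      rw [Real.rpow_neg ht.le, div_eq_mul_inv]
    have hode' := hode t ht
    rw [hdiv] at hode'
    have hode2 : x'' t + ((r * t ^ (-α)) • x' t + f' (x t)) = 0 := by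
      rw [← add_assoc]; exact hode'
    have hx2 : x'' t = -((r * t ^ (-α)) • x' t) - f' (x t) := by
      rw [eq_neg_of_add_eq_zero_left hode2]; abel
    rw [hGdef, hDdef]
    refine hG0.congr_deriv ?_
    simp only [Pi.sub_apply, Pi.mul_apply]
    rw [hx2]
    simp only [inner_add_left, inner_add_right, inner_sub_left, inner_sub_right,
      inner_neg_left, inner_neg_right, real_inner_smul_left, real_inner_smul_right]
    simp only [real_inner_comm xstar (x t), real_inner_comm (x' t) (x t),
      real_inner_comm (x' t) xstar, real_inner_comm (x' t) (f' (x t)),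
      real_inner_comm (x t) (f' (x t)), real_inner_comm xstar (f' (x t))]
    push_cast
    ring
  have hDle : ∀ s : ℝ, T ≤ s → D s ≤ 0 := by
    intro s hs
    have hspos : 0 < s := lt_of_lt_of_le hT hs
    have he : 0 < s ^ (-α) := Real.rpow_pos_of_pos hspos _
    have hi : 0 < s⁻¹ := inv_pos.mpr hspos
    have hQ : (0:ℝ) ≤ ⟪x s - xstar, x s - xstar⟫ := real_inner_self_nonneg
    have hscv := hsc2 (x s)
    rw [← real_inner_self_eq_norm_sq] at hscv
    have he2 : (s ^ (-α)) ^ 2 ≤ 9 * μ / (2 * r ^ 2) := by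
      have h1 : s ^ (-α) = (s ^ α)⁻¹ := Real.rpow_neg hspos.le α
      have h2 : s ^ α * s ^ α = s ^ (2 * α) := by
        rw [← Real.rpow_add hspos]; ring_nf
      have h3 : (s ^ (2 * α))⁻¹ ≤ (2 * r ^ 2 / (9 * μ))⁻¹ :=
        inv_anti₀ hbase (hpow s hs)
      have h4 : ((2 : ℝ) * r ^ 2 / (9 * μ))⁻¹ = 9 * μ / (2 * r ^ 2) := by
        rw [inv_div]
      calc (s ^ (-α)) ^ 2 = (s ^ (2 * α))⁻¹ := by rw [h1, sq, ← mul_inv, h2]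
        _ ≤ 9 * μ / (2 * r ^ 2) := by rw [← h4]; exact h3
    have he2' : (s ^ (-α)) ^ 2 * (2 * r ^ 2) ≤ 9 * μ :=
      (le_div_iff₀ (by positivity)).mp he2
    have hkey : (s ^ (-α)) ^ 2 * (2 * r ^ 2) * (r * s ^ (-α) * ⟪x s - xstar, x s - xstar⟫)
        ≤ 9 * μ * (r * s ^ (-α) * ⟪x s - xstar, x s - xstar⟫) :=
      mul_le_mul_of_nonneg_right he2' (mul_nonneg (mul_nonneg hr.le he.le) hQ)
    have hscv' : 2 / 3 * r * s ^ (-α)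
          * (f (x s) - f xstar - ⟪f' (x s), x s - xstar⟫)
        ≤ 2 / 3 * r * s ^ (-α) * (-(μ / 2) * ⟪x s - xstar, x s - xstar⟫) :=
      mul_le_mul_of_nonneg_left hscv (by positivity)
    have hnn : (0:ℝ) ≤ α * (α + 1) * r / 3 * (s ^ (-α) * (s⁻¹) ^ 2)
        * ⟪x s - xstar, x s - xstar⟫ :=
      mul_nonneg (by positivity) hQ
    have hX : 2 / 3 * r * s ^ (-α)
          * (f (x s) - f xstar - ⟪f' (x s), x s - xstar⟫)
        + (2 / 27 * r ^ 3 * (s ^ (-α)) ^ 3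
            - α * (α + 1) * r / 3 * (s ^ (-α) * (s⁻¹) ^ 2))
          * ⟪x s - xstar, x s - xstar⟫ ≤ 0 := by nlinarith [hkey, hscv', hnn]
    rw [hDdef]
    calc Real.exp (2 / 3 * (r / (1 - α)) * s ^ (1 - α))
          * (2 / 3 * r * s ^ (-α)
              * (f (x s) - f xstar - ⟪f' (x s), x s - xstar⟫)
            + (2 / 27 * r ^ 3 * (s ^ (-α)) ^ 3
                - α * (α + 1) * r / 3 * (s ^ (-α) * (s⁻¹) ^ 2))
              * ⟪x s - xstar, x s - xstar⟫)
        ≤ Real.exp (2 / 3 * (r / (1 - α)) * s ^ (1 - α)) * 0 :=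
          mul_le_mul_of_nonneg_left hX (Real.exp_pos _).le
      _ = 0 := by ring
  have hED : ∀ s : ℝ, 0 < s → HasDerivAt E (D s) s := fun s hs =>
    (hmain s hs).congr_of_eventuallyEq
      (Filter.eventuallyEq_of_mem (Ioi_mem_nhds hs) fun y hy => hEG y hy)
  have hanti : AntitoneOn E (Set.Ici T) := by
    apply antitoneOn_of_deriv_nonpos (convex_Ici T)
    · exact fun s hs => (hED s (hT.trans_le hs)).continuousAt.continuousWithinAt
    · intro s hs
      rw [interior_Ici] at hs
      exact (hED s (hT.trans hs)).differentiableAt.differentiableWithinAt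
    · intro s hs
      rw [interior_Ici] at hs
      rw [(hED s (hT.trans hs)).deriv]
      exact hDle s hs.le
  have htpos : 0 < t := hT.trans_le htT
  have hEt : E t ≤ E T := hanti Set.self_mem_Ici htT htT
  have hfirst : 0 ≤ Real.exp (2 / 3 * (r / (1 - α)) * t ^ (1 - α))
      * (f (x t) - f xstar
          - (r ^ 2 * t ^ (-α) - 3 * r * α * t⁻¹) / (9 * t ^ α) * ‖x t - xstar‖ ^ 2) := by
    apply mul_nonneg (Real.exp_pos _).le
    have h1 := hgrow (x t)
    have hta : 0 < t ^ α := Real.rpow_pos_of_pos htpos _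
    have hc : (r ^ 2 * t ^ (-α) - 3 * r * α * t⁻¹) / (9 * t ^ α) ≤ μ / 2 := by
      rw [div_le_iff₀ (by positivity)]
      have h2 : 2 * r ^ 2 / (9 * μ) ≤ t ^ (2 * α) := hpow t htT
      have h3 : t ^ α * t ^ α = t ^ (2 * α) := by
        rw [← Real.rpow_add htpos]; ring_nf
      have h4 : 2 * r ^ 2 ≤ 9 * μ * (t ^ α * t ^ α) := by
        have h2' := (div_le_iff₀ (by positivity : (0:ℝ) < 9 * μ)).mp h2
        rw [h3]; linarith
      have h5 : t ^ (-α) = (t ^ α)⁻¹ := Real.rpow_neg htpos.le α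
      have h7 : 0 < t⁻¹ := inv_pos.mpr htpos
      have h9 : 9 * μ * (t ^ α * t ^ α) * (t ^ α)⁻¹ = 9 * μ * t ^ α := by
        field_simp
      have h10 := mul_le_mul_of_nonneg_right h4 (inv_pos.mpr hta).le
      rw [h9] at h10
      have h11 : 0 < 3 * r * α * t⁻¹ := by positivity
      rw [h5]
      linarith only [h10, h11]
    have h8 : (r ^ 2 * t ^ (-α) - 3 * r * α * t⁻¹) / (9 * t ^ α) * ‖x t - xstar‖ ^ 2
        ≤ μ / 2 * ‖x t - xstar‖ ^ 2 :=
      mul_le_mul_of_nonneg_right hc (sq_nonneg _)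
    linarith only [h1, h8]
  have hle : 1 / 2 * Real.exp (2 / 3 * (r / (1 - α)) * t ^ (1 - α))
      * ‖x' t + (2 / 3 * r * t ^ (-α)) • (x t - xstar)‖ ^ 2 ≤ E t := by
    rw [hE t]
    linarith only [hfirst]
  exact hle.trans hEt
end

section
/- Define y(t) = exp((2/3)·(r/(1−α))·t^{1−α})·(x(t) − x_*). Then for all t > 0, ẏ(t) = exp((2/3)·(r/(1−α))·t^{1−α})·( ẋ(t) + (2/3)·r·t^{−α}·(x(t) − x_*) ), and consequently ‖ẏ(t)‖ ≤ √(2·E(T)) · exp((1/3)·(r/(1−α))·t^{1−α}) for all t ≥ T := (2r²/(9μ))^{1/(2α)}. -/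
open scoped RealInnerProductSpace

set_option maxHeartbeats 1000000 in
/-- Equations (32)–(33) in the proof of Lemma 9: with
`y t = exp((2/3)(r/(1-α)) t^(1-α)) • (x t - x_*)`,
`ẏ(t) = exp((2/3)(r/(1-α)) t^(1-α)) • (ẋ(t) + (2/3) r t^(-α) • (x t - x_*))` for `t > 0`,
and `‖ẏ(t)‖ ≤ √(2 E(T)) exp((1/3)(r/(1-α)) t^(1-α))` for `t ≥ T := (2r²/(9μ))^(1/(2α))`. -/
theorem stmt_15
{n : ℕ} (μ r α : ℝ) (hμ : 0 < μ) (hr : 0 < r) (hα0 : 0 < α) (hα1 : α < 1)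
    (f : EuclideanSpace ℝ (Fin n) → ℝ)
    (f' : EuclideanSpace ℝ (Fin n) → EuclideanSpace ℝ (Fin n))
    (hf' : ∀ p, HasGradientAt f (f' p) p)
    (hsc : ∀ p q, f q ≥ f p + ⟪f' p, q - p⟫ + μ / 2 * ‖q - p‖ ^ 2)
    (xstar : EuclideanSpace ℝ (Fin n)) (hmin : ∀ p, f xstar ≤ f p)
    (x x' x'' : ℝ → EuclideanSpace ℝ (Fin n))
    (hx : ∀ t > (0:ℝ), HasDerivAt x (x' t) t)
    (hx' : ∀ t > (0:ℝ), HasDerivAt x' (x'' t) t)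
    (hode : ∀ t > (0:ℝ), x'' t + (r / t ^ α) • x' t + f' (x t) = 0)
(E : ℝ → ℝ)
    (hE : ∀ t, E t
        = Real.exp (2 / 3 * (r / (1 - α)) * t ^ (1 - α))
            * (f (x t) - f xstar
                - (r ^ 2 * t ^ (-α) - 3 * r * α * t⁻¹) / (9 * t ^ α) * ‖x t - xstar‖ ^ 2)
          + 1 / 2 * Real.exp (2 / 3 * (r / (1 - α)) * t ^ (1 - α))
            * ‖x' t + (2 / 3 * r * t ^ (-α)) • (x t - xstar)‖ ^ 2) :
    (∀ t > (0:ℝ), HasDerivAt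
      (fun s : ℝ => Real.exp (2 / 3 * (r / (1 - α)) * s ^ (1 - α)) • (x s - xstar))
      (Real.exp (2 / 3 * (r / (1 - α)) * t ^ (1 - α))
        • (x' t + (2 / 3 * r * t ^ (-α)) • (x t - xstar))) t) ∧
    (∀ t, (2 * r ^ 2 / (9 * μ)) ^ (1 / (2 * α)) ≤ t →
      ‖Real.exp (2 / 3 * (r / (1 - α)) * t ^ (1 - α))
          • (x' t + (2 / 3 * r * t ^ (-α)) • (x t - xstar))‖
        ≤ Real.sqrt (2 * E ((2 * r ^ 2 / (9 * μ)) ^ (1 / (2 * α)))) * Real.exp (1 / 3 * (r / (1 - α)) * t ^ (1 - α))) := by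
  have hα1' : (1:ℝ) - α ≠ 0 := by linarith
  -- derivative of the exponential factor
  have he : ∀ t > (0:ℝ), HasDerivAt (fun s : ℝ => Real.exp (2 / 3 * (r / (1 - α)) * s ^ (1 - α)))
      (Real.exp (2 / 3 * (r / (1 - α)) * t ^ (1 - α)) * (2/3 * r * t ^ (-α))) t := by
    intro t ht
    have h1 : HasDerivAt (fun s : ℝ => s ^ (1 - α)) ((1 - α) * t ^ (-α)) t := by
      have := Real.hasDerivAt_rpow_const (x := t) (p := 1 - α) (Or.inl ht.ne')
      convert this using 2
      rw [show (1 : ℝ) - α - 1 = -α by ring]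
    have h2 := ((h1.const_mul (2 / 3 * (r / (1 - α)))).exp)
    convert h2 using 1
    field_simp
  have part1 : ∀ t > (0:ℝ), HasDerivAt
      (fun s : ℝ => Real.exp (2 / 3 * (r / (1 - α)) * s ^ (1 - α)) • (x s - xstar))
      (Real.exp (2 / 3 * (r / (1 - α)) * t ^ (1 - α))
        • (x' t + (2 / 3 * r * t ^ (-α)) • (x t - xstar))) t := by
    intro t ht
    have h := (he t ht).smul ((hx t ht).sub_const xstar)
    refine h.congr_deriv ?_
    rw [smul_add, smul_smul, add_comm]
  refine ⟨part1, ?_⟩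
  -- notation
  set T : ℝ := (2 * r ^ 2 / (9 * μ)) ^ (1 / (2 * α)) with hT
  have hT0 : 0 < T := Real.rpow_pos_of_pos (by positivity) _
  -- gradient vanishes at the minimizer
  have hgrad0 : f' xstar = 0 := by
    have hloc : IsLocalMin f xstar := Filter.Eventually.of_forall hmin
    have h0 := hloc.hasFDerivAt_eq_zero (hf' xstar).hasFDerivAt
    exact (InnerProductSpace.toDual ℝ _).map_eq_zero_iff.mp h0
  -- strong convexity consequences
  have hsc2 : ∀ t : ℝ, μ / 2 * ‖x t - xstar‖ ^ 2 ≤ f (x t) - f xstar := by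
    intro t
    have h := hsc xstar (x t)
    rw [hgrad0] at h
    simp only [inner_zero_left] at h
    linarith
  have hsc1 : ∀ t : ℝ, f (x t) - f xstar + μ / 2 * ⟪x t - xstar, x t - xstar⟫
      ≤ ⟪f' (x t), x t - xstar⟫ := by
    intro t
    have h := hsc (x t) xstar
    rw [show xstar - x t = -(x t - xstar) by abel, inner_neg_right, norm_neg,
      ← real_inner_self_eq_norm_sq] at h
    linarith
  -- the key bound t^(2α) ≥ 2r²/(9μ) for t ≥ T
  have hT2 : ∀ t : ℝ, T ≤ t → 2 * r ^ 2 * ((t ^ α)⁻¹) ^ 2 ≤ 9 * μ := by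
    intro t htT
    have ht : 0 < t := lt_of_lt_of_le hT0 htT
    have hTval : T ^ (2 * α) = 2 * r ^ 2 / (9 * μ) := by
      rw [hT, ← Real.rpow_mul (by positivity : (0:ℝ) ≤ 2 * r ^ 2 / (9 * μ)),
        show 1 / (2 * α) * (2 * α) = 1 by field_simp, Real.rpow_one]
    have h1 : 2 * r ^ 2 / (9 * μ) ≤ t ^ (2 * α) :=
      hTval ▸ Real.rpow_le_rpow hT0.le htT (by positivity)
    have hsq : ((t ^ α)⁻¹) ^ 2 = (t ^ (2 * α))⁻¹ := by
      rw [inv_pow, show (2:ℝ) * α = α * 2 by ring, Real.rpow_mul ht.le, Real.rpow_two]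
    rw [hsq]
    have hpos : (0:ℝ) < t ^ (2 * α) := Real.rpow_pos_of_pos ht _
    have h2 : (t ^ (2 * α))⁻¹ ≤ (2 * r ^ 2 / (9 * μ))⁻¹ :=
      inv_anti₀ (by positivity) h1
    calc 2 * r ^ 2 * (t ^ (2 * α))⁻¹ ≤ 2 * r ^ 2 * (2 * r ^ 2 / (9 * μ))⁻¹ :=
          mul_le_mul_of_nonneg_left h2 (by positivity)
      _ = 9 * μ := by field_simp
  -- replace E by its formula
  have hEeq : E = fun t : ℝ =>
      Real.exp (2 / 3 * (r / (1 - α)) * t ^ (1 - α))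
          * (f (x t) - f xstar
              - (r ^ 2 * t ^ (-α) - 3 * r * α * t⁻¹) / (9 * t ^ α) * ‖x t - xstar‖ ^ 2)
        + 1 / 2 * Real.exp (2 / 3 * (r / (1 - α)) * t ^ (1 - α))
          * ‖x' t + (2 / 3 * r * t ^ (-α)) • (x t - xstar)‖ ^ 2 := funext hE
  subst hEeq
  -- derivative of E
  have hdiff : ∀ t : ℝ, 0 < t → HasDerivAt (fun t : ℝ =>
      Real.exp (2 / 3 * (r / (1 - α)) * t ^ (1 - α))
          * (f (x t) - f xstar
              - (r ^ 2 * t ^ (-α) - 3 * r * α * t⁻¹) / (9 * t ^ α) * ‖x t - xstar‖ ^ 2)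
        + 1 / 2 * Real.exp (2 / 3 * (r / (1 - α)) * t ^ (1 - α))
          * ‖x' t + (2 / 3 * r * t ^ (-α)) • (x t - xstar)‖ ^ 2)
      (Real.exp (2 / 3 * (r / (1 - α)) * t ^ (1 - α)) * (2/3 * r * t ^ (-α))
          * (f (x t) - f xstar
              - (r ^ 2 * t ^ (-α) - 3 * r * α * t⁻¹) / (9 * t ^ α) * ‖x t - xstar‖ ^ 2)
        + Real.exp (2 / 3 * (r / (1 - α)) * t ^ (1 - α))
          * (⟪f' (x t), x' t⟫
             - (((r ^ 2 * (-α * (t ^ (-α) * t⁻¹)) - 3 * r * α * (-(t⁻¹ * t⁻¹))) * t ^ (-α)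
                  + (r ^ 2 * t ^ (-α) - 3 * r * α * t⁻¹) * (-α * (t ^ (-α) * t⁻¹))) / 9
                    * ‖x t - xstar‖ ^ 2
                + (r ^ 2 * t ^ (-α) - 3 * r * α * t⁻¹) / (9 * t ^ α)
                    * (2 * ⟪x t - xstar, x' t⟫)))
        + (1 / 2 * (Real.exp (2 / 3 * (r / (1 - α)) * t ^ (1 - α)) * (2/3 * r * t ^ (-α)))
            * ‖x' t + (2 / 3 * r * t ^ (-α)) • (x t - xstar)‖ ^ 2
          + 1 / 2 * Real.exp (2 / 3 * (r / (1 - α)) * t ^ (1 - α))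
            * (2 * ⟪x' t + (2 / 3 * r * t ^ (-α)) • (x t - xstar),
                x'' t + ((2 / 3 * r * t ^ (-α)) • x' t
                  + (2 / 3 * r * (-α * (t ^ (-α) * t⁻¹))) • (x t - xstar))⟫))) t := by
    intro t ht
    have hp : HasDerivAt (fun s : ℝ => s ^ (-α)) (-α * (t ^ (-α) * t⁻¹)) t := by
      have := Real.hasDerivAt_rpow_const (x := t) (p := -α) (Or.inl ht.ne')
      convert this using 2
      rw [show -α - 1 = -α + (-1 : ℝ) by ring, Real.rpow_add ht, Real.rpow_neg_one]
    have hq : HasDerivAt (fun s : ℝ => s⁻¹) (-(t⁻¹ * t⁻¹)) t := by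
      have := hasDerivAt_inv ht.ne'
      refine this.congr_deriv ?_
      rw [sq, mul_inv]
    have hB : HasDerivAt (fun s : ℝ => (r ^ 2 * s ^ (-α) - 3 * r * α * s⁻¹) / (9 * s ^ α))
        (((r ^ 2 * (-α * (t ^ (-α) * t⁻¹)) - 3 * r * α * (-(t⁻¹ * t⁻¹))) * t ^ (-α)
          + (r ^ 2 * t ^ (-α) - 3 * r * α * t⁻¹) * (-α * (t ^ (-α) * t⁻¹))) / 9) t := by
      have hBt : HasDerivAt (fun s : ℝ => (r ^ 2 * s ^ (-α) - 3 * r * α * s⁻¹) * s ^ (-α) / 9)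
          (((r ^ 2 * (-α * (t ^ (-α) * t⁻¹)) - 3 * r * α * (-(t⁻¹ * t⁻¹))) * t ^ (-α)
            + (r ^ 2 * t ^ (-α) - 3 * r * α * t⁻¹) * (-α * (t ^ (-α) * t⁻¹))) / 9) t :=
        (((hp.const_mul (r ^ 2)).sub (hq.const_mul (3 * r * α))).mul hp).div_const 9
      have heq : (fun s : ℝ => (r ^ 2 * s ^ (-α) - 3 * r * α * s⁻¹) / (9 * s ^ α))
          =ᶠ[nhds t] (fun s : ℝ => (r ^ 2 * s ^ (-α) - 3 * r * α * s⁻¹) * s ^ (-α) / 9) := by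
        filter_upwards [Ioi_mem_nhds ht] with s hs
        rw [Real.rpow_neg (le_of_lt hs), div_eq_mul_inv, mul_inv]
        ring
      exact heq.hasDerivAt_iff.mpr hBt
    have hxu := (hx t ht).sub_const xstar
    have hN : HasDerivAt (fun s : ℝ => ‖x s - xstar‖ ^ 2) (2 * ⟪x t - xstar, x' t⟫) t := by
      have h := hxu.inner ℝ hxu
      simp only [real_inner_self_eq_norm_sq] at h
      refine h.congr_deriv ?_
      rw [real_inner_comm]; ring
    have hF : HasDerivAt (fun s : ℝ => f (x s) - f xstar) ⟪f' (x t), x' t⟫ t := by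
      have h := ((hf' (x t)).hasFDerivAt.comp_hasDerivAt t (hx t ht)).sub_const (f xstar)
      simpa using h
    have ha : HasDerivAt (fun s : ℝ => 2 / 3 * r * s ^ (-α))
        (2 / 3 * r * (-α * (t ^ (-α) * t⁻¹))) t := hp.const_mul _
    have hv : HasDerivAt (fun s : ℝ => x' s + (2 / 3 * r * s ^ (-α)) • (x s - xstar))
        (x'' t + ((2 / 3 * r * t ^ (-α)) • x' t
          + (2 / 3 * r * (-α * (t ^ (-α) * t⁻¹))) • (x t - xstar))) t := by
      have h := (hx' t ht).add (ha.smul hxu)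
      exact h
    have hV : HasDerivAt (fun s : ℝ => ‖x' s + (2 / 3 * r * s ^ (-α)) • (x s - xstar)‖ ^ 2)
        (2 * ⟪x' t + (2 / 3 * r * t ^ (-α)) • (x t - xstar),
          x'' t + ((2 / 3 * r * t ^ (-α)) • x' t
            + (2 / 3 * r * (-α * (t ^ (-α) * t⁻¹))) • (x t - xstar))⟫) t := by
      have h := hv.inner ℝ hv
      simp only [real_inner_self_eq_norm_sq] at h
      refine h.congr_deriv ?_
      rw [real_inner_comm]; ring
    have h := ((he t ht).mul (hF.sub (hB.mul hN))).add (((he t ht).const_mul (1/2)).mul hV)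
    exact h
  -- the derivative is nonpositive on [T, ∞)
  have hnonpos : ∀ t : ℝ, T ≤ t → deriv (fun t : ℝ =>
      Real.exp (2 / 3 * (r / (1 - α)) * t ^ (1 - α))
          * (f (x t) - f xstar
              - (r ^ 2 * t ^ (-α) - 3 * r * α * t⁻¹) / (9 * t ^ α) * ‖x t - xstar‖ ^ 2)
        + 1 / 2 * Real.exp (2 / 3 * (r / (1 - α)) * t ^ (1 - α))
          * ‖x' t + (2 / 3 * r * t ^ (-α)) • (x t - xstar)‖ ^ 2) t ≤ 0 := by
    intro t htT
    have ht : 0 < t := lt_of_lt_of_le hT0 htT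
    rw [(hdiff t ht).deriv]
    have hxdd : x'' t = -((r / t ^ α) • x' t) - f' (x t) := by
      have h0 := hode t ht
      rw [add_assoc, add_eq_zero_iff_eq_neg] at h0
      rw [h0]; abel
    rw [hxdd]
    set ee := Real.exp (2 / 3 * (r / (1 - α)) * t ^ (1 - α)) with hee
    set u := x t - xstar with hu
    set w := x' t with hw
    set G := f' (x t) with hG
    have hPi : (0:ℝ) < (t ^ α)⁻¹ := by positivity
    have hQ : (0:ℝ) < t⁻¹ := by positivity
    have hepos : (0:ℝ) < ee := Real.exp_pos _
    have hsuu : (0:ℝ) ≤ ⟪u, u⟫ := real_inner_self_nonneg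
    have hsc1' : f (x t) - f xstar + μ / 2 * ⟪u, u⟫ ≤ ⟪G, u⟫ := hsc1 t
    have h2r := hT2 t htT
    simp only [Real.rpow_neg ht.le, div_eq_mul_inv, ← real_inner_self_eq_norm_sq,
      inner_add_left, inner_add_right, inner_sub_left, inner_sub_right, inner_neg_left,
      inner_neg_right, real_inner_smul_left, real_inner_smul_right, mul_inv]
    simp only [real_inner_comm G w, real_inner_comm G u, real_inner_comm u w]
    nlinarith [mul_nonneg (mul_nonneg hepos.le (by positivity : (0:ℝ) ≤ 2/3 * r * (t ^ α)⁻¹))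
        (sub_nonneg.2 hsc1'),
      mul_nonneg (mul_nonneg hepos.le
        (by positivity : (0:ℝ) ≤ r * (t ^ α)⁻¹ * ⟪u, u⟫ / 27))
        (sub_nonneg.2 h2r),
      mul_nonneg hepos.le (by positivity :
        (0:ℝ) ≤ r * α * (1 + α) / 3 * (t ^ α)⁻¹ * t⁻¹ ^ 2 * ⟪u, u⟫),
      mul_nonneg (mul_nonneg hepos.le hPi.le) hsuu]
  -- E is antitone on [T, ∞)
  have hanti : AntitoneOn (fun t : ℝ =>
      Real.exp (2 / 3 * (r / (1 - α)) * t ^ (1 - α))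
          * (f (x t) - f xstar
              - (r ^ 2 * t ^ (-α) - 3 * r * α * t⁻¹) / (9 * t ^ α) * ‖x t - xstar‖ ^ 2)
        + 1 / 2 * Real.exp (2 / 3 * (r / (1 - α)) * t ^ (1 - α))
          * ‖x' t + (2 / 3 * r * t ^ (-α)) • (x t - xstar)‖ ^ 2) (Set.Ici T) := by
    apply antitoneOn_of_deriv_nonpos (convex_Ici T)
    · intro t htT
      exact (hdiff t (lt_of_lt_of_le hT0 htT)).continuousAt.continuousWithinAt
    · intro t htT
      rw [interior_Ici] at htT
      exact (hdiff t (lt_trans hT0 htT)).differentiableAt.differentiableWithinAt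
    · intro t htT
      rw [interior_Ici] at htT
      exact hnonpos t (le_of_lt htT)
  -- lower bound : E t ≥ (1/2) e t ‖v t‖²
  have hlow : ∀ t : ℝ, T ≤ t →
      1 / 2 * Real.exp (2 / 3 * (r / (1 - α)) * t ^ (1 - α))
          * ‖x' t + (2 / 3 * r * t ^ (-α)) • (x t - xstar)‖ ^ 2
      ≤ Real.exp (2 / 3 * (r / (1 - α)) * t ^ (1 - α))
          * (f (x t) - f xstar
              - (r ^ 2 * t ^ (-α) - 3 * r * α * t⁻¹) / (9 * t ^ α) * ‖x t - xstar‖ ^ 2)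
        + 1 / 2 * Real.exp (2 / 3 * (r / (1 - α)) * t ^ (1 - α))
          * ‖x' t + (2 / 3 * r * t ^ (-α)) • (x t - xstar)‖ ^ 2 := by
    intro t htT
    have ht : 0 < t := lt_of_lt_of_le hT0 htT
    have hepos : (0:ℝ) < Real.exp (2 / 3 * (r / (1 - α)) * t ^ (1 - α)) := Real.exp_pos _
    have hPi : (0:ℝ) < (t ^ α)⁻¹ := by positivity
    have hQ : (0:ℝ) < t⁻¹ := by positivity
    have hN0 : (0:ℝ) ≤ ‖x t - xstar‖ ^ 2 := by positivity
    have h2r := hT2 t htT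
    have hsc2' := hsc2 t
    have hkey : (r ^ 2 * t ^ (-α) - 3 * r * α * t⁻¹) / (9 * t ^ α) * ‖x t - xstar‖ ^ 2
        ≤ f (x t) - f xstar := by
      rw [Real.rpow_neg ht.le, div_eq_mul_inv, mul_inv]
      have hB2 : (r ^ 2 * (t ^ α)⁻¹ - 3 * r * α * t⁻¹) * (9⁻¹ * (t ^ α)⁻¹) ≤ μ / 2 := by
        nlinarith [mul_nonneg (mul_nonneg (mul_nonneg hr.le hα0.le) hQ.le) hPi.le]
      nlinarith [mul_le_mul_of_nonneg_right hB2 hN0]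
    nlinarith [mul_le_mul_of_nonneg_left hkey hepos.le]
  -- finish
  intro t htT
  have ht : 0 < t := lt_of_lt_of_le hT0 htT
  have hepos : (0:ℝ) < Real.exp (2 / 3 * (r / (1 - α)) * t ^ (1 - α)) := Real.exp_pos _
  set L := ‖Real.exp (2 / 3 * (r / (1 - α)) * t ^ (1 - α))
      • (x' t + (2 / 3 * r * t ^ (-α)) • (x t - xstar))‖ with hL
  have hLval : L = Real.exp (2 / 3 * (r / (1 - α)) * t ^ (1 - α))
      * ‖x' t + (2 / 3 * r * t ^ (-α)) • (x t - xstar)‖ := by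
    rw [hL, norm_smul, Real.norm_eq_abs, abs_of_pos hepos]
  have hET : (0:ℝ) ≤ Real.exp (2 / 3 * (r / (1 - α)) * T ^ (1 - α))
          * (f (x T) - f xstar
              - (r ^ 2 * T ^ (-α) - 3 * r * α * T⁻¹) / (9 * T ^ α) * ‖x T - xstar‖ ^ 2)
        + 1 / 2 * Real.exp (2 / 3 * (r / (1 - α)) * T ^ (1 - α))
          * ‖x' T + (2 / 3 * r * T ^ (-α)) • (x T - xstar)‖ ^ 2 := by
    have h := hlow T le_rfl
    have : (0:ℝ) ≤ 1 / 2 * Real.exp (2 / 3 * (r / (1 - α)) * T ^ (1 - α))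
        * ‖x' T + (2 / 3 * r * T ^ (-α)) • (x T - xstar)‖ ^ 2 := by positivity
    linarith
  have hEtT := hanti (Set.self_mem_Ici) (htT : t ∈ Set.Ici T) htT
  have hlow' := hlow t htT
  -- squared comparison
  have hsq : L ^ 2 ≤ (Real.sqrt (2 * (Real.exp (2 / 3 * (r / (1 - α)) * T ^ (1 - α))
          * (f (x T) - f xstar
              - (r ^ 2 * T ^ (-α) - 3 * r * α * T⁻¹) / (9 * T ^ α) * ‖x T - xstar‖ ^ 2)
        + 1 / 2 * Real.exp (2 / 3 * (r / (1 - α)) * T ^ (1 - α))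
          * ‖x' T + (2 / 3 * r * T ^ (-α)) • (x T - xstar)‖ ^ 2))
        * Real.exp (1 / 3 * (r / (1 - α)) * t ^ (1 - α))) ^ 2 := by
    rw [mul_pow, Real.sq_sqrt (by linarith)]
    have hexp2 : Real.exp (1 / 3 * (r / (1 - α)) * t ^ (1 - α)) ^ 2
        = Real.exp (2 / 3 * (r / (1 - α)) * t ^ (1 - α)) := by
      rw [sq, ← Real.exp_add]; ring_nf
    rw [hexp2, hLval, mul_pow]
    nlinarith [hlow', hEtT, hepos, sq_nonneg ‖x' t + (2 / 3 * r * t ^ (-α)) • (x t - xstar)‖]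
  calc L = Real.sqrt (L ^ 2) := (Real.sqrt_sq (by rw [hL]; positivity)).symm
    _ ≤ _ := by
        refine le_trans (Real.sqrt_le_sqrt hsq) (le_of_eq (Real.sqrt_sq ?_))
        positivity
end

section
/- Suppose y : (0,∞) → ℝ^n is differentiable, extends continuously to 0 with value y(0), and satisfies ‖ẏ(s)‖ ≤ K · exp((1/3)·(r/(1−α))·s^{1−α}) for all s in (0, t], where K ≥ 0. Then ‖y(t)‖ · exp(−(2/3)·(r/(1−α))·t^{1−α}) ≤ (3K/r)·t^{α}·exp(−(1/3)·(r/(1−α))·t^{1−α}) + ‖y(0)‖·exp(−(2/3)·(r/(1−α))·t^{1−α}) for every t > 0. -/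
open scoped RealInnerProductSpace
open Set

-- auxiliary: derivative of F
lemma aux_hasDerivAt (r α K : ℝ) (hα1 : α < 1) {s : ℝ} (hs : 0 < s) :
    HasDerivAt (fun u : ℝ => 3 * K / r * u ^ α * Real.exp (1 / 3 * (r / (1 - α)) * u ^ (1 - α)))
      (3 * K / r * (α * s ^ (α - 1)) * Real.exp (1 / 3 * (r / (1 - α)) * s ^ (1 - α))
        + 3 * K / r * s ^ α *
          (Real.exp (1 / 3 * (r / (1 - α)) * s ^ (1 - α)) *
            (1 / 3 * (r / (1 - α)) * ((1 - α) * s ^ (1 - α - 1))))) s := by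
  have h1 : HasDerivAt (fun u : ℝ => 3 * K / r * u ^ α) (3 * K / r * (α * s ^ (α - 1))) s :=
    (Real.hasDerivAt_rpow_const (Or.inl hs.ne')).const_mul _
  have h2 : HasDerivAt (fun u : ℝ => 1 / 3 * (r / (1 - α)) * u ^ (1 - α))
      (1 / 3 * (r / (1 - α)) * ((1 - α) * s ^ (1 - α - 1))) s :=
    (Real.hasDerivAt_rpow_const (Or.inl hs.ne')).const_mul _
  exact h1.mul h2.exp

/-- Inequality (34) in the proof of Lemma 9: if `y` is differentiable on `(0, ∞)`,
extends continuously to `0`, and `‖ẏ(s)‖ ≤ K exp((1/3)(r/(1-α)) s^(1-α))` on `(0, t]`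
with `K ≥ 0`, then `‖y t‖ exp(-(2/3)(r/(1-α)) t^(1-α))
  ≤ (3K/r) t^α exp(-(1/3)(r/(1-α)) t^(1-α)) + ‖y 0‖ exp(-(2/3)(r/(1-α)) t^(1-α))`. -/
theorem stmt_16 {n : ℕ} (r α K : ℝ) (hr : 0 < r) (hα0 : 0 < α) (hα1 : α < 1) (hK : 0 ≤ K)
    (y y' : ℝ → EuclideanSpace ℝ (Fin n))
    (hy : ∀ s > (0:ℝ), HasDerivAt y (y' s) s)
    (hy0 : ContinuousWithinAt y (Set.Ici 0) 0) :
    ∀ t > (0:ℝ),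
      (∀ s ∈ Set.Ioc (0:ℝ) t, ‖y' s‖ ≤ K * Real.exp (1 / 3 * (r / (1 - α)) * s ^ (1 - α))) →
      ‖y t‖ * Real.exp (-(2 / 3 * (r / (1 - α)) * t ^ (1 - α)))
        ≤ 3 * K / r * t ^ α * Real.exp (-(1 / 3 * (r / (1 - α)) * t ^ (1 - α)))
          + ‖y 0‖ * Real.exp (-(2 / 3 * (r / (1 - α)) * t ^ (1 - α))) := by
  intro t ht hbound
  have h1α : (0:ℝ) < 1 - α := by linarith
  set F : ℝ → ℝ := fun u => 3 * K / r * u ^ α * Real.exp (1 / 3 * (r / (1 - α)) * u ^ (1 - α))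
    with hF
  -- step 1: for every ε ∈ Ioc 0 t, ‖y t‖ ≤ ‖y ε‖ + F t - F ε
  have step1 : ∀ ε ∈ Ioc (0:ℝ) t, ‖y t‖ ≤ ‖y ε‖ - F ε + F t := by
    intro ε hε
    set B : ℝ → ℝ := fun u => ‖y ε‖ - F ε + F u with hB
    set B' : ℝ → ℝ := fun u =>
      3 * K / r * (α * u ^ (α - 1)) * Real.exp (1 / 3 * (r / (1 - α)) * u ^ (1 - α))
        + 3 * K / r * u ^ α *
          (Real.exp (1 / 3 * (r / (1 - α)) * u ^ (1 - α)) *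
            (1 / 3 * (r / (1 - α)) * ((1 - α) * u ^ (1 - α - 1)))) with hB'
    have hFd : ∀ x ∈ Ico ε t, HasDerivAt B (B' x) x := by
      intro x hx
      exact (aux_hasDerivAt r α K hα1 (lt_of_lt_of_le hε.1 hx.1)).const_add _
    have key : ∀ x ∈ Icc ε t, ‖y x‖ ≤ B x := by
      apply image_norm_le_of_norm_deriv_right_le_deriv_boundary'
        (f' := y') (B := B) (B' := B')
      · intro x hx
        exact ((hy x (lt_of_lt_of_le hε.1 hx.1)).continuousAt).continuousWithinAt
      · intro x hx
        exact (hy x (lt_of_lt_of_le hε.1 hx.1)).hasDerivWithinAt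
      · simp [hB, hF]
      · intro x hx
        exact (aux_hasDerivAt r α K hα1 (lt_of_lt_of_le hε.1 hx.1)).const_add (‖y ε‖ - F ε)
          |>.continuousAt.continuousWithinAt
      · intro x hx
        exact (hFd x hx).hasDerivWithinAt
      · intro x hx
        have hx0 : 0 < x := lt_of_lt_of_le hε.1 hx.1
        have hb := hbound x ⟨hx0, hx.2.le⟩
        have hE : 0 < Real.exp (1 / 3 * (r / (1 - α)) * x ^ (1 - α)) := Real.exp_pos _
        have hterm1 : 0 ≤ 3 * K / r * (α * x ^ (α - 1)) *
            Real.exp (1 / 3 * (r / (1 - α)) * x ^ (1 - α)) := by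
          apply mul_nonneg (mul_nonneg (by positivity) (by positivity)) hE.le
        have hx1 : x ^ α * x ^ (-α) = 1 := by
          rw [← Real.rpow_add hx0]
          simp
        set E := Real.exp (1 / 3 * (r / (1 - α)) * x ^ (1 - α)) with hEdef
        have hterm2 : 3 * K / r * x ^ α *
            (E * (1 / 3 * (r / (1 - α)) * ((1 - α) * x ^ (-α)))) = K * E := by
          have hα' : (1:ℝ) - α ≠ 0 := h1α.ne'
          field_simp
          linear_combination K * hx1
        simp only [hB']
        rw [show (1:ℝ) - α - 1 = -α by ring, hterm2]
        linarith
    have := key t ⟨hε.2, le_refl t⟩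
    simpa [hB] using this
  -- step 2: take the limit ε → 0⁺
  have hFlim : Filter.Tendsto F (nhdsWithin 0 (Ioi 0)) (nhds 0) := by
    have h1 : ContinuousAt (fun u : ℝ => u ^ α) 0 :=
      Real.continuousAt_rpow_const 0 α (Or.inr hα0.le)
    have h2 : ContinuousAt (fun u : ℝ => u ^ (1 - α)) 0 :=
      Real.continuousAt_rpow_const 0 (1 - α) (Or.inr h1α.le)
    have hc : ContinuousAt F 0 := by
      apply ContinuousAt.mul (h1.const_mul _) ((Real.continuous_exp.continuousAt.comp (h2.const_mul _)))
    have h0 : F 0 = 0 := by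
      simp [hF, Real.zero_rpow hα0.ne']
    have := hc.continuousWithinAt (s := Ioi 0)
    rw [ContinuousWithinAt, h0] at this
    exact this
  have hylim : Filter.Tendsto (fun ε => ‖y ε‖ - F ε + F t) (nhdsWithin 0 (Ioi 0))
      (nhds (‖y 0‖ - 0 + F t)) := by
    have hy' : Filter.Tendsto (fun ε => ‖y ε‖) (nhdsWithin 0 (Ioi 0)) (nhds ‖y 0‖) := by
      have := hy0.tendsto.mono_left (nhdsWithin_mono 0 Ioi_subset_Ici_self)
      exact (continuous_norm.tendsto _).comp this
    exact (hy'.sub hFlim).add tendsto_const_nhds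
  have H : ‖y t‖ ≤ ‖y 0‖ + F t := by
    have hne : (nhdsWithin (0:ℝ) (Ioi 0)).NeBot := nhdsGT_neBot 0
    have hev : ∀ᶠ ε in nhdsWithin (0:ℝ) (Ioi 0), ‖y t‖ ≤ ‖y ε‖ - F ε + F t := by
      filter_upwards [Ioc_mem_nhdsGT_of_mem ⟨le_refl (0:ℝ), ht⟩] with ε hε
      exact step1 ε hε
    have := ge_of_tendsto hylim hev
    linarith
  -- step 3: multiply by the exponential and conclude
  have hE2 : (0:ℝ) < Real.exp (-(2 / 3 * (r / (1 - α)) * t ^ (1 - α))) := Real.exp_pos _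
  have hkey : Real.exp (1 / 3 * (r / (1 - α)) * t ^ (1 - α)) *
      Real.exp (-(2 / 3 * (r / (1 - α)) * t ^ (1 - α)))
      = Real.exp (-(1 / 3 * (r / (1 - α)) * t ^ (1 - α))) := by
    rw [← Real.exp_add]; ring_nf
  calc ‖y t‖ * Real.exp (-(2 / 3 * (r / (1 - α)) * t ^ (1 - α)))
      ≤ (‖y 0‖ + F t) * Real.exp (-(2 / 3 * (r / (1 - α)) * t ^ (1 - α))) :=
        mul_le_mul_of_nonneg_right H hE2.le
    _ = 3 * K / r * t ^ α * Real.exp (-(1 / 3 * (r / (1 - α)) * t ^ (1 - α)))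
          + ‖y 0‖ * Real.exp (-(2 / 3 * (r / (1 - α)) * t ^ (1 - α))) := by
        simp only [hF]
        rw [add_mul, mul_assoc (3 * K / r * t ^ α), hkey]
        ring
end

section
/- There exists a constant C > 0 such that for all t ≥ T := (2r²/(9μ))^{1/(2α)}, ((r²·t^{−α} − 3rα·t^{−1})/(9·t^{α}))·‖x(t) − x_*‖² ≤ C · exp(−(2/3)·(r/(1−α))·t^{1−α}). -/
open scoped RealInnerProductSpace

set_option maxHeartbeats 1000000 in
/-- Lemma 9: for `t ≥ T := (2r²/(9μ))^(1/(2α))`,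
`((r² t^(-α) - 3rα t⁻¹)/(9 t^α)) ‖x t - x_*‖² = O(exp(-(2/3)(r/(1-α)) t^(1-α)))`. -/
theorem stmt_17
{n : ℕ} (μ r α : ℝ) (hμ : 0 < μ) (hr : 0 < r) (hα0 : 0 < α) (hα1 : α < 1)
    (f : EuclideanSpace ℝ (Fin n) → ℝ)
    (f' : EuclideanSpace ℝ (Fin n) → EuclideanSpace ℝ (Fin n))
    (hf' : ∀ p, HasGradientAt f (f' p) p)
    (hsc : ∀ p q, f q ≥ f p + ⟪f' p, q - p⟫ + μ / 2 * ‖q - p‖ ^ 2)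
    (xstar : EuclideanSpace ℝ (Fin n)) (hmin : ∀ p, f xstar ≤ f p)
    (x x' x'' : ℝ → EuclideanSpace ℝ (Fin n))
    (hx : ∀ t > (0:ℝ), HasDerivAt x (x' t) t)
    (hx' : ∀ t > (0:ℝ), HasDerivAt x' (x'' t) t)
    (hode : ∀ t > (0:ℝ), x'' t + (r / t ^ α) • x' t + f' (x t) = 0)
    (hx0 : ContinuousWithinAt x (Set.Ici 0) 0) :
    ∃ C > (0:ℝ), ∀ t, (2 * r ^ 2 / (9 * μ)) ^ (1 / (2 * α)) ≤ t →
      (r ^ 2 * t ^ (-α) - 3 * r * α * t⁻¹) / (9 * t ^ α) * ‖x t - xstar‖ ^ 2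
        ≤ C * Real.exp (-(2 / 3 * (r / (1 - α)) * t ^ (1 - α))) := by
  classical
  set l : ℝ → ℝ := fun s => r / 3 * s ^ (-α) with hl_def
  set l1 : ℝ → ℝ := fun s => -(r * α / 3) * s ^ (-α - 1) with hl1_def
  set l2 : ℝ → ℝ := fun s => r * α * (α + 1) / 3 * s ^ (-α - 2) with hl2_def
  set Lam : ℝ → ℝ := fun s => r / (3 * (1 - α)) * s ^ (1 - α) with hLam_def
  set T : ℝ := (2 * r ^ 2 / (9 * μ)) ^ (1 / (2 * α)) with hT_def
  set T1 : ℝ := (4 * r ^ 2 / (9 * μ)) ^ (1 / (2 * α)) with hT1_def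
  have h1α : (0:ℝ) < 1 - α := by linarith
  have h2α : (0:ℝ) < 2 * α := by linarith
  have hTpos : 0 < T := Real.rpow_pos_of_pos (by positivity) _
  have hT1pos : 0 < T1 := Real.rpow_pos_of_pos (by positivity) _
  have hTT1 : T ≤ T1 := by
    apply Real.rpow_le_rpow (by positivity) _ (by positivity)
    apply div_le_div_of_nonneg_right ?_ (by positivity)
    · nlinarith [sq_nonneg r]
  have hlpos : ∀ s : ℝ, 0 < s → 0 < l s := fun s hs => by
    have := Real.rpow_pos_of_pos hs (-α); simp only [hl_def]; positivity
  have hl1neg : ∀ s : ℝ, 0 < s → l1 s ≤ 0 := fun s hs => by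
    have h : 0 ≤ r * α / 3 * s ^ (-α - 1) := by positivity
    simp only [hl1_def]; linarith
  have hl2pos : ∀ s : ℝ, 0 < s → 0 ≤ l2 s := fun s hs => by
    have := (Real.rpow_pos_of_pos hs (-α - 2)).le
    simp only [hl2_def]; positivity
  have hdl : ∀ s : ℝ, 0 < s → HasDerivAt l (l1 s) s := by
    intro s hs
    have h := (Real.hasDerivAt_rpow_const (p := -α) (Or.inl hs.ne')).const_mul (r / 3)
    refine h.congr_deriv ?_
    simp only [hl1_def]; ring_nf
  have hdl1 : ∀ s : ℝ, 0 < s → HasDerivAt l1 (l2 s) s := by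
    intro s hs
    have h := (Real.hasDerivAt_rpow_const (p := -α - 1) (Or.inl hs.ne')).const_mul (-(r * α / 3))
    refine h.congr_deriv ?_
    simp only [hl2_def]
    rw [show -α - 1 - 1 = -α - 2 by ring]; ring
  have hdLam : ∀ s : ℝ, 0 < s → HasDerivAt Lam (l s) s := by
    intro s hs
    have h := (Real.hasDerivAt_rpow_const (p := 1 - α) (Or.inl hs.ne')).const_mul (r / (3 * (1 - α)))
    refine h.congr_deriv ?_
    rw [show 1 - α - 1 = -α by ring]
    simp only [hl_def]
    field_simp
  have hlbound : ∀ (c : ℝ), 0 < c → ∀ t : ℝ, (c * r ^ 2 / (9 * μ)) ^ (1 / (2 * α)) ≤ t →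
      c * l t ^ 2 ≤ μ := by
    intro c hc t ht
    have htpos : 0 < t := lt_of_lt_of_le (Real.rpow_pos_of_pos (by positivity) _) ht
    have hbase : (0:ℝ) < c * r ^ 2 / (9 * μ) := by positivity
    have h1 : c * r ^ 2 / (9 * μ) ≤ t ^ (2 * α) := by
      calc c * r ^ 2 / (9 * μ) = ((c * r ^ 2 / (9 * μ)) ^ (1 / (2 * α))) ^ (2 * α) := by
            rw [← Real.rpow_mul hbase.le, one_div_mul_cancel h2α.ne', Real.rpow_one]
        _ ≤ t ^ (2 * α) := Real.rpow_le_rpow (Real.rpow_pos_of_pos hbase _).le ht h2α.le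
    have h2 : l t ^ 2 = r ^ 2 / 9 * (t ^ (2 * α))⁻¹ := by
      have ha : t ^ (-α) * t ^ (-α) = t ^ (-(2*α)) := by
        rw [← Real.rpow_add htpos]; ring_nf
      have hb : t ^ (-(2*α)) = (t ^ (2*α))⁻¹ := Real.rpow_neg htpos.le _
      simp only [hl_def]
      calc (r / 3 * t ^ (-α)) ^ 2 = r^2/9 * (t ^ (-α) * t ^ (-α)) := by ring
        _ = r^2/9 * (t ^ (2*α))⁻¹ := by rw [ha, hb]
    have h3 : (t ^ (2*α))⁻¹ ≤ 9 * μ / (c * r ^ 2) := by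
      rw [inv_le_comm₀ (lt_of_lt_of_le hbase h1) (by positivity)]
      calc (9 * μ / (c * r ^ 2))⁻¹ = c * r^2 / (9 * μ) := by field_simp
        _ ≤ t ^ (2*α) := h1
    calc c * l t ^ 2 = c * (r^2/9) * (t ^ (2*α))⁻¹ := by rw [h2]; ring
      _ ≤ c * (r^2/9) * (9 * μ / (c * r^2)) :=
          mul_le_mul_of_nonneg_left h3 (by positivity)
      _ = μ := by field_simp
  -- gradient at minimizer is zero
  have hgrad0 : f' xstar = 0 := by
    have hlm : IsLocalMin f xstar := Filter.Eventually.of_forall hmin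
    have h0 := hlm.hasFDerivAt_eq_zero (hasGradientAt_iff_hasFDerivAt.mp (hf' xstar))
    exact (InnerProductSpace.toDual ℝ _).injective (by simpa using h0)
  have hlow : ∀ p, μ/2 * ⟪p - xstar, p - xstar⟫ ≤ f p - f xstar := by
    intro p
    have h := hsc xstar p
    rw [hgrad0, inner_zero_left] at h
    rw [real_inner_self_eq_norm_sq]
    linarith
  have hP : ∀ s : ℝ, (f (x s) - f xstar) + μ/2 * ⟪x s - xstar, x s - xstar⟫
      ≤ ⟪f' (x s), x s - xstar⟫ := by
    intro s
    have h := hsc (x s) xstar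
    rw [show xstar - x s = -(x s - xstar) by abel, inner_neg_right, norm_neg] at h
    rw [real_inner_self_eq_norm_sq]
    linarith
  -- ODE rearranged
  have hxpp : ∀ s : ℝ, 0 < s → x'' s = -(f' (x s)) - (3 * l s) • x' s := by
    intro s hs
    have h3 : r / s ^ α = 3 * l s := by
      simp only [hl_def]
      rw [Real.rpow_neg hs.le]
      ring
    have h := hode s hs
    rw [h3] at h
    have h4 := eq_neg_of_add_eq_zero_left h
    have h5 := eq_sub_of_add_eq h4
    exact h5
  -- the Lyapunov function and its derivative
  set v : ℝ → EuclideanSpace ℝ (Fin n) := fun s => x' s + (2 * l s) • (x s - xstar) with hv_def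
  set v1 : ℝ → EuclideanSpace ℝ (Fin n) :=
    fun s => x'' s + ((2 * l s) • x' s + (2 * l1 s) • (x s - xstar)) with hv1_def
  set E : ℝ → ℝ := fun s => f (x s) - f xstar + ⟪v s, v s⟫/2
      - (l s^2 + l1 s) * ⟪x s - xstar, x s - xstar⟫ with hE_def
  set DE : ℝ → ℝ := fun s => ⟪f' (x s), x' s⟫ + (⟪v s, v1 s⟫ + ⟪v1 s, v s⟫)/2
      - ((2 * l s * l1 s + l2 s) * ⟪x s - xstar, x s - xstar⟫
         + (l s^2 + l1 s) * (⟪x s - xstar, x' s⟫ + ⟪x' s, x s - xstar⟫)) with hDE_def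
  set G : ℝ → ℝ := fun s => E s * Real.exp (2 * Lam s) with hG_def
  have hy : ∀ s : ℝ, 0 < s → HasDerivAt (fun s => x s - xstar) (x' s) s :=
    fun s hs => (hx s hs).sub_const xstar
  have hdv : ∀ s : ℝ, 0 < s → HasDerivAt v (v1 s) s := by
    intro s hs
    exact (hx' s hs).add ((((hdl s hs).const_mul 2)).smul (hy s hs))
  have hfx : ∀ s : ℝ, 0 < s → HasDerivAt (fun s => f (x s)) ⟪f' (x s), x' s⟫ s := by
    intro s hs
    have h := (hasGradientAt_iff_hasFDerivAt.mp (hf' (x s))).comp_hasDerivAt s (hx s hs)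
    simp at h; exact h
  have hdE : ∀ s : ℝ, 0 < s → HasDerivAt E (DE s) s := by
    intro s hs
    have hcoef : HasDerivAt (fun s => l s^2 + l1 s) (2 * l s * l1 s + l2 s) s := by
      have h := ((hdl s hs).pow 2).add (hdl1 s hs)
      refine h.congr_deriv ?_
      push_cast
      ring
    exact (((hfx s hs).sub_const (f xstar)).add
        (((hdv s hs).inner ℝ (hdv s hs)).div_const 2)).sub
      (hcoef.mul ((hy s hs).inner ℝ (hy s hs)))
  have hdG : ∀ s : ℝ, 0 < s →
      HasDerivAt G ((DE s + 2 * l s * E s) * Real.exp (2 * Lam s)) s := by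
    intro s hs
    have hexp : HasDerivAt (fun s => Real.exp (2 * Lam s))
        (Real.exp (2 * Lam s) * (2 * l s)) s := ((hdLam s hs).const_mul 2).exp
    have h := (hdE s hs).mul hexp
    refine h.congr_deriv ?_
    ring
  -- key differential inequality
  have hDEle : ∀ s : ℝ, T ≤ s → DE s + 2 * l s * E s ≤ 0 := by
    intro s hsT
    have hs : 0 < s := lt_of_lt_of_le hTpos hsT
    have key : DE s + 2 * l s * E s
        = 2 * l s * ((f (x s) - f xstar) - ⟪f' (x s), x s - xstar⟫)
          + (2 * l s^3 - l2 s) * ⟪x s - xstar, x s - xstar⟫ := by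
      simp only [hDE_def, hE_def, hv_def, hv1_def]
      rw [hxpp s hs]
      simp only [inner_add_left, inner_add_right, inner_sub_left, inner_sub_right,
        inner_neg_left, inner_neg_right, real_inner_smul_left, real_inner_smul_right]
      have c1 : ⟪x s, f' (x s)⟫ = ⟪f' (x s), x s⟫ := real_inner_comm _ _
      have c2 : ⟪xstar, f' (x s)⟫ = ⟪f' (x s), xstar⟫ := real_inner_comm _ _
      have c3 : ⟪x s, x' s⟫ = ⟪x' s, x s⟫ := real_inner_comm _ _
      have c4 : ⟪xstar, x' s⟫ = ⟪x' s, xstar⟫ := real_inner_comm _ _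
      have c5 : ⟪xstar, x s⟫ = ⟪x s, xstar⟫ := real_inner_comm _ _
      have c6 : ⟪x' s, f' (x s)⟫ = ⟪f' (x s), x' s⟫ := real_inner_comm _ _
      simp only [c1, c2, c3, c4, c5, c6]
      ring
    rw [key]
    have h2l := hlbound 2 two_pos s hsT
    have hCq : (0:ℝ) ≤ ⟪x s - xstar, x s - xstar⟫ := real_inner_self_nonneg
    have hPs := hP s
    have hls := hlpos s hs
    have hl2s := hl2pos s hs
    nlinarith [mul_le_mul_of_nonneg_left hPs (by linarith : (0:ℝ) ≤ 2 * l s),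
      mul_nonneg (mul_nonneg (by linarith : (0:ℝ) ≤ l s) hCq)
        (by nlinarith : (0:ℝ) ≤ μ - 2 * l s ^2)]
  -- G is antitone on [T, ∞)
  have hGanti : AntitoneOn G (Set.Ici T) := by
    apply antitoneOn_of_deriv_nonpos (convex_Ici T)
    · intro s hs
      exact (hdG s (lt_of_lt_of_le hTpos hs)).continuousAt.continuousWithinAt
    · intro s hs
      rw [interior_Ici] at hs
      exact (hdG s (lt_of_lt_of_le hTpos hs.le)).differentiableAt.differentiableWithinAt
    · intro s hs
      rw [interior_Ici] at hs
      rw [(hdG s (lt_of_lt_of_le hTpos hs.le)).deriv]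
      exact mul_nonpos_of_nonpos_of_nonneg (hDEle s hs.le) (Real.exp_pos _).le
  -- the simple energy W is antitone
  set W : ℝ → ℝ := fun s => f (x s) - f xstar + ⟪x' s, x' s⟫/2 with hW_def
  have hdW : ∀ s : ℝ, 0 < s →
      HasDerivAt W (⟪f' (x s), x' s⟫ + (⟪x' s, x'' s⟫ + ⟪x'' s, x' s⟫)/2) s := by
    intro s hs
    exact ((hfx s hs).sub_const (f xstar)).add
      (((hx' s hs).inner ℝ (hx' s hs)).div_const 2)
  have hWanti : AntitoneOn W (Set.Ici T) := by
    apply antitoneOn_of_deriv_nonpos (convex_Ici T)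
    · intro s hs
      exact (hdW s (lt_of_lt_of_le hTpos hs)).continuousAt.continuousWithinAt
    · intro s hs
      rw [interior_Ici] at hs
      exact (hdW s (lt_of_lt_of_le hTpos hs.le)).differentiableAt.differentiableWithinAt
    · intro s hs
      rw [interior_Ici] at hs
      have hs0 : 0 < s := lt_of_lt_of_le hTpos hs.le
      rw [(hdW s hs0).deriv, hxpp s hs0]
      simp only [inner_sub_left, inner_sub_right, inner_neg_left, inner_neg_right,
        real_inner_smul_left, real_inner_smul_right]
      have c1 : ⟪x s, f' (x s)⟫ = ⟪f' (x s), x s⟫ := real_inner_comm _ _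
      have c2 : ⟪xstar, f' (x s)⟫ = ⟪f' (x s), xstar⟫ := real_inner_comm _ _
      have c3 : ⟪x s, x' s⟫ = ⟪x' s, x s⟫ := real_inner_comm _ _
      have c4 : ⟪xstar, x' s⟫ = ⟪x' s, xstar⟫ := real_inner_comm _ _
      have c5 : ⟪xstar, x s⟫ = ⟪x s, xstar⟫ := real_inner_comm _ _
      have c6 : ⟪x' s, f' (x s)⟫ = ⟪f' (x s), x' s⟫ := real_inner_comm _ _
      simp only [c1, c2, c3, c4, c5, c6]
      have hA : (0:ℝ) ≤ ⟪x' s, x' s⟫ := real_inner_self_nonneg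
      have hls := hlpos s hs0
      nlinarith
  have hWnonneg : 0 ≤ W T := by
    simp only [hW_def]
    have h1 := hmin (x T)
    have h2 : (0:ℝ) ≤ ⟪x' T, x' T⟫ := real_inner_self_nonneg
    linarith
  -- the constant
  refine ⟨max (max (G T) (W T * Real.exp (2 * Lam T1))) 1,
    lt_of_lt_of_le one_pos (le_max_right _ _), ?_⟩
  intro t ht
  set C : ℝ := max (max (G T) (W T * Real.exp (2 * Lam T1))) 1 with hC_def
  have hCpos : (0:ℝ) < C := lt_of_lt_of_le one_pos (le_max_right _ _)
  have htpos : 0 < t := lt_of_lt_of_le hTpos ht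
  -- rewrite the left-hand side coefficient and the exponent
  have hco : (r ^ 2 * t ^ (-α) - 3 * r * α * t⁻¹) / (9 * t ^ α) = l t^2 + l1 t := by
    have e1 : t ^ (-α) = (t ^ α)⁻¹ := Real.rpow_neg htpos.le α
    have e2 : t ^ (-α - 1) = (t ^ α)⁻¹ * t⁻¹ := by
      rw [show -α - 1 = -α + (-1) by ring, Real.rpow_add htpos, Real.rpow_neg_one, e1]
    have e3 : (0:ℝ) < t ^ α := Real.rpow_pos_of_pos htpos α
    simp only [hl_def, hl1_def]
    rw [e1, e2]
    field_simp
    ring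
  have hexpid : -(2 / 3 * (r / (1 - α)) * t ^ (1 - α)) = -(2 * Lam t) := by
    simp only [hLam_def]; field_simp
  have hnorm : ‖x t - xstar‖ ^ 2 = ⟪x t - xstar, x t - xstar⟫ :=
    (real_inner_self_eq_norm_sq _).symm
  rw [hnorm, hco, hexpid]
  have hCq : (0:ℝ) ≤ ⟪x t - xstar, x t - xstar⟫ := real_inner_self_nonneg
  rcases le_or_gt (l t^2 + l1 t) 0 with hneg | hposc
  · calc (l t^2 + l1 t) * ⟪x t - xstar, x t - xstar⟫ ≤ 0 :=
        mul_nonpos_of_nonpos_of_nonneg hneg hCq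
      _ ≤ C * Real.exp (-(2 * Lam t)) := by positivity
  · by_cases hT1t : T1 ≤ t
    · -- region 1 : t ≥ T1, use the Lyapunov decay
      have h4l := hlbound 4 (by norm_num) t hT1t
      have hvv : (0:ℝ) ≤ ⟪v t, v t⟫ := real_inner_self_nonneg
      have hlowt := hlow (x t)
      have hEb : (l t^2 + l1 t) * ⟪x t - xstar, x t - xstar⟫ ≤ E t := by
        simp only [hE_def]
        have hl1t := hl1neg t htpos
        nlinarith
      have hGt : G t ≤ G T := hGanti Set.self_mem_Ici ht ht
      have hEt : E t ≤ G T * Real.exp (-(2 * Lam t)) := by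
        have he : Real.exp (2 * Lam t) > 0 := Real.exp_pos _
        have : E t * Real.exp (2 * Lam t) ≤ G T := hGt
        calc E t = E t * Real.exp (2 * Lam t) * Real.exp (-(2 * Lam t)) := by
              rw [mul_assoc, ← Real.exp_add]; simp
          _ ≤ G T * Real.exp (-(2 * Lam t)) :=
              mul_le_mul_of_nonneg_right this (Real.exp_pos _).le
      have hGC : G T ≤ C := le_trans (le_max_left _ _) (le_max_left _ _)
      calc (l t^2 + l1 t) * ⟪x t - xstar, x t - xstar⟫ ≤ E t := hEb
        _ ≤ G T * Real.exp (-(2 * Lam t)) := hEt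
        _ ≤ C * Real.exp (-(2 * Lam t)) :=
            mul_le_mul_of_nonneg_right hGC (Real.exp_pos _).le
    · -- region 2 : T ≤ t ≤ T1, crude bound
      have htT1 : t ≤ T1 := le_of_not_ge hT1t
      have h2l := hlbound 2 two_pos t ht
      have hWt : W t ≤ W T := hWanti Set.self_mem_Ici ht ht
      have hlowt := hlow (x t)
      have hvv : (0:ℝ) ≤ ⟪x' t, x' t⟫ := real_inner_self_nonneg
      have hCqW : ⟪x t - xstar, x t - xstar⟫ ≤ 2/μ * W T := by
        simp only [hW_def] at hWt ⊢
        rw [div_mul_eq_mul_div, le_div_iff₀ hμ]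
        nlinarith
      have hl1t := hl1neg t htpos
      have hLamle : Lam t ≤ Lam T1 := by
        simp only [hLam_def]
        apply mul_le_mul_of_nonneg_left _ (by positivity)
        exact Real.rpow_le_rpow htpos.le htT1 h1α.le
      have hRHS : W T ≤ C * Real.exp (-(2 * Lam t)) := by
        have h1 : W T * Real.exp (2 * Lam T1) ≤ C := le_trans (le_max_right _ _) (le_max_left _ _)
        have h2 : W T = W T * Real.exp (2 * Lam T1) * Real.exp (-(2 * Lam T1)) := by
          rw [mul_assoc, ← Real.exp_add]; simp
        rw [h2]
        have h3 : Real.exp (-(2 * Lam T1)) ≤ Real.exp (-(2 * Lam t)) := by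
          apply Real.exp_le_exp.mpr; linarith
        calc W T * Real.exp (2 * Lam T1) * Real.exp (-(2 * Lam T1))
            ≤ C * Real.exp (-(2 * Lam T1)) :=
              mul_le_mul_of_nonneg_right h1 (Real.exp_pos _).le
          _ ≤ C * Real.exp (-(2 * Lam t)) :=
              mul_le_mul_of_nonneg_left h3 hCpos.le
      calc (l t^2 + l1 t) * ⟪x t - xstar, x t - xstar⟫
          ≤ l t^2 * ⟪x t - xstar, x t - xstar⟫ := by nlinarith
        _ ≤ (μ/2) * (2/μ * W T) := by
            have hW0 : 0 ≤ 2/μ * W T := le_trans hCq hCqW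
            nlinarith
        _ = W T := by field_simp
        _ ≤ C * Real.exp (-(2 * Lam t)) := hRHS
end
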